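/- arXiv:2308.08604 — 6 statements merged into one kernel-verified Lean document; each statement's English description precedes it below -/
import Mathlib

section
/- Let n ≥ 3 and m ≥ 4, and let H be the graph obtained from the cycle C_n and the path P_m by identifying one vertex of C_n with an endpoint of P_m (a 1-clique sum of C_n and P_m). Then v(C_n) + v(P_{m−2}) − 1 ≤ v(H) ≤ v(C_n) + v(P_{m−2}). -/
open MvPolynomial

noncomputable section

/-- The `v`-number of a graded ideal `I ⊆ K[x_1,…,x_t]`: the least `k ≥ 0` such that there is a
homogeneous polynomial `f` of degree `k` with `(I : f)` an associated prime of `S/I`. -/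
def vNumber {σ K : Type*} [Field K] (I : Ideal (MvPolynomial σ K)) : ℕ :=
  sInf {k : ℕ | ∃ f : MvPolynomial σ K, f.IsHomogeneous k ∧
    Submodule.colon I (Ideal.span {f}) ∈
      associatedPrimes (MvPolynomial σ K) (MvPolynomial σ K ⧸ I)}

/-- The edge ideal of a simple graph: generated by `x_i * x_j` for edges `{x_i, x_j}`. -/
def edgeIdeal (K : Type*) [Field K] {V : Type*} (G : SimpleGraph V) :
    Ideal (MvPolynomial V K) :=
  Ideal.span {m | ∃ i j, G.Adj i j ∧ m = X i * X j}

/-- `I` is a monomial ideal: generated by a set of monomials. -/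
def IsMonomialIdeal {σ K : Type*} [Field K] (I : Ideal (MvPolynomial σ K)) : Prop :=
  ∃ A : Set (σ →₀ ℕ), I = Ideal.span ((fun a => (monomial a (1 : K))) '' A)

/-- The graded maximal ideal `𝔪 = ⟨x_1,…,x_t⟩`. -/
def maxIdeal (K : Type*) [Field K] (σ : Type*) : Ideal (MvPolynomial σ K) :=
  Ideal.span (Set.range (X : σ → MvPolynomial σ K))

/-- `α(I)`: the minimum degree of a nonzero element of `I`. -/
def alphaNumber {σ K : Type*} [Field K] (I : Ideal (MvPolynomial σ K)) : ℕ :=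
  sInf {d : ℕ | ∃ f ∈ I, f ≠ 0 ∧ f.totalDegree = d}

/-- Exponent vectors of the minimal monomial generators of a monomial ideal `I`:
monomials in `I` none of whose proper divisors lies in `I`. -/
def minimalGenerators {σ K : Type*} [Field K] (I : Ideal (MvPolynomial σ K)) :
    Set (σ →₀ ℕ) :=
  {a | (monomial a (1 : K)) ∈ I ∧
    ∀ b : σ →₀ ℕ, b ≤ a → b ≠ a → (monomial b (1 : K)) ∉ I}

/-- The 1-clique sum of the cycle `C_n` (on the vertices `0, …, n-1`) and the path `P_m`
(on the vertices `0, n, n+1, …, n+m-2`), identified at the vertex `0`. -/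
def cyclePathSum (n m : ℕ) : SimpleGraph (Fin (n + (m - 1))) :=
  SimpleGraph.fromRel fun i j =>
    (j.val = i.val + 1 ∧ i.val + 1 < n) ∨
    (i.val = 0 ∧ j.val = n - 1) ∨
    (i.val = 0 ∧ j.val = n) ∨
    (j.val = i.val + 1 ∧ n ≤ i.val)

namespace VN

open scoped Classical




variable {K : Type*} [Field K] {V : Type*}

/-- The prime generated by the variables in `C`. -/
abbrev PC (K : Type*) [Field K] {V : Type*} (C : Set V) : Ideal (MvPolynomial V K) :=
  Ideal.span (X '' C)

lemma mem_PC {C : Set V} {p : MvPolynomial V K} :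
    p ∈ PC K C ↔ ∀ d ∈ p.support, ∃ i ∈ C, d i ≠ 0 :=
  mem_ideal_span_X_image

/-- The substitution killing the variables in `C`. -/
def kill (K : Type*) [Field K] {V : Type*} (C : Set V) :
    MvPolynomial V K →ₐ[K] MvPolynomial V K :=
  aeval (fun i => if i ∈ C then 0 else X i)

lemma kill_monomial_avoid {C : Set V} {e : V →₀ ℕ} {c : K} (h : ∀ i ∈ C, e i = 0) :
    kill K C (monomial e c) = monomial e c := by
  rw [kill, aeval_monomial, monomial_eq]
  congr 1
  apply Finsupp.prod_congr
  intro i hi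
  rw [if_neg]
  intro hiC
  exact (Finsupp.mem_support_iff.mp hi) (h i hiC)

lemma kill_monomial_touch {C : Set V} {e : V →₀ ℕ} {c : K} {i : V} (hiC : i ∈ C)
    (hie : e i ≠ 0) : kill K C (monomial e c) = 0 := by
  rw [kill, aeval_monomial]
  have : (e.prod fun n k => (if n ∈ C then (0 : MvPolynomial V K) else X n) ^ k) = 0 := by
    apply Finset.prod_eq_zero (Finsupp.mem_support_iff.mpr hie)
    simp only [if_pos hiC, zero_pow hie]
  rw [this, mul_zero]

lemma coeff_kill {C : Set V} {p : MvPolynomial V K} {d : V →₀ ℕ} (hd : ∀ i ∈ C, d i = 0) :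
    coeff d (kill K C p) = coeff d p := by
  conv_lhs => rw [p.as_sum, map_sum, coeff_sum]
  rw [Finset.sum_eq_single d]
  · by_cases hdp : d ∈ p.support
    · rw [kill_monomial_avoid hd, coeff_monomial, if_pos rfl]
    · rw [notMem_support_iff.mp hdp]; simp
  · intro e he hed
    by_cases hC : ∀ i ∈ C, e i = 0
    · rw [kill_monomial_avoid hC, coeff_monomial, if_neg hed]
    · push_neg at hC
      obtain ⟨i, hiC, hie⟩ := hC
      rw [kill_monomial_touch hiC hie, coeff_zero]
  · intro h
    rw [notMem_support_iff.mp h]; simp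

lemma kill_eq_zero_of_mem {C : Set V} {p : MvPolynomial V K} (hp : p ∈ PC K C) :
    kill K C p = 0 := by
  have : PC K C ≤ RingHom.ker (kill K C).toRingHom := by
    rw [Ideal.span_le]
    rintro _ ⟨i, hi, rfl⟩
    simp only [SetLike.mem_coe, RingHom.mem_ker, AlgHom.toRingHom_eq_coe, RingHom.coe_coe]
    rw [kill, aeval_X, if_pos hi]
  exact this hp

lemma mem_of_kill_eq_zero {C : Set V} {p : MvPolynomial V K} (hp : kill K C p = 0) :
    p ∈ PC K C := by
  by_contra h
  rw [mem_PC] at h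
  push_neg at h
  obtain ⟨d, hd, hdi⟩ := h
  have : coeff d (kill K C p) = coeff d p := coeff_kill (fun i hi => hdi i hi)
  rw [hp, coeff_zero] at this
  exact (mem_support_iff.mp hd) this.symm

lemma PC_prime (C : Set V) : (PC K C).IsPrime := by
  constructor
  · intro h
    have h1 : (1 : MvPolynomial V K) ∈ PC K C := h ▸ Submodule.mem_top
    rw [mem_PC] at h1
    obtain ⟨i, _, hi⟩ := h1 0 (by simp)
    simp at hi
  · intro p q hpq
    by_contra h
    push_neg at h
    obtain ⟨hp, hq⟩ := h
    have hkp : kill K C p ≠ 0 := fun hz => hp (mem_of_kill_eq_zero hz)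
    have hkq : kill K C q ≠ 0 := fun hz => hq (mem_of_kill_eq_zero hz)
    have : kill K C (p * q) = 0 := kill_eq_zero_of_mem hpq
    rw [map_mul] at this
    exact mul_ne_zero hkp hkq this





variable {K : Type*} [Field K] {V : Type*} {G : SimpleGraph V}

lemma X_mul_X (i j : V) :
    (X i * X j : MvPolynomial V K) =
      monomial (Finsupp.single i 1 + Finsupp.single j 1) 1 := by
  rw [X, X, monomial_mul, one_mul]

def edgeSupp (G : SimpleGraph V) : Set (V →₀ ℕ) :=
  {d | ∃ i j, G.Adj i j ∧ d = Finsupp.single i 1 + Finsupp.single j 1}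

lemma edgeIdeal_eq_span :
    edgeIdeal K G = Ideal.span ((fun a => monomial a (1 : K)) '' edgeSupp G) := by
  have hset : {m : MvPolynomial V K | ∃ i j, G.Adj i j ∧ m = X i * X j} =
      (fun a => monomial a (1 : K)) '' edgeSupp G := by
    ext p
    constructor
    · rintro ⟨i, j, hij, rfl⟩
      exact ⟨_, ⟨i, j, hij, rfl⟩, (X_mul_X i j).symm⟩
    · rintro ⟨d, ⟨i, j, hij, rfl⟩, rfl⟩
      exact ⟨i, j, hij, (X_mul_X i j).symm⟩
  rw [edgeIdeal, hset]

lemma edge_le_iff {i j : V} (hij : i ≠ j) (d : V →₀ ℕ) :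
    Finsupp.single i 1 + Finsupp.single j 1 ≤ d ↔ 1 ≤ d i ∧ 1 ≤ d j := by
  rw [Finsupp.le_def]
  constructor
  · intro h
    constructor
    · have := h i
      simpa [Finsupp.single_apply, hij.symm] using this
    · have := h j
      simpa [Finsupp.single_apply, hij] using this
  · rintro ⟨h1, h2⟩ k
    simp only [Finsupp.add_apply, Finsupp.single_apply]
    split_ifs with hik hjk hjk
    · exact absurd (hik.trans hjk.symm) hij
    · subst hik
      simpa using h1
    · subst hjk
      simpa using h2
    · simp

lemma mem_edgeIdeal {p : MvPolynomial V K} :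
    p ∈ edgeIdeal K G ↔
      ∀ d ∈ p.support, ∃ i j, G.Adj i j ∧ 1 ≤ d i ∧ 1 ≤ d j := by
  rw [edgeIdeal_eq_span, mem_ideal_span_monomial_image]
  apply forall₂_congr
  intro d _
  constructor
  · rintro ⟨e, ⟨i, j, hij, rfl⟩, hle⟩
    exact ⟨i, j, hij, (edge_le_iff hij.ne d).mp hle⟩
  · rintro ⟨i, j, hij, h1, h2⟩
    exact ⟨_, ⟨i, j, hij, rfl⟩, (edge_le_iff hij.ne d).mpr ⟨h1, h2⟩⟩

lemma monomial_mem_edgeIdeal {d : V →₀ ℕ} :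
    (monomial d (1 : K)) ∈ edgeIdeal K G ↔
      ∃ i j, G.Adj i j ∧ 1 ≤ d i ∧ 1 ≤ d j := by
  rw [mem_edgeIdeal]
  constructor
  · intro h
    exact h d (by rw [support_monomial]; simp)
  · intro h e he
    rw [support_monomial, if_neg (one_ne_zero)] at he
    rw [Finset.mem_singleton] at he
    subst he
    exact h

section Colon

variable {R : Type*} [CommRing R]

lemma colon_span_zero (I : Ideal R) :
    Submodule.colon I (Ideal.span {(0 : R)}) = ⊤ := by
  rw [eq_top_iff]
  intro r _
  rw [Ideal.mem_colon_span_singleton, mul_zero]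
  exact I.zero_mem

lemma colon_top_span (f : R) :
    Submodule.colon (⊤ : Ideal R) (Ideal.span {f}) = ⊤ := by
  rw [eq_top_iff]
  intro r _
  rw [Ideal.mem_colon_span_singleton]
  exact Submodule.mem_top

lemma colon_inf_span (J J' : Ideal R) (f : R) :
    Submodule.colon (J ⊓ J') (Ideal.span {f}) =
      Submodule.colon J (Ideal.span {f}) ⊓ Submodule.colon J' (Ideal.span {f}) := by
  ext r
  simp only [Ideal.mem_colon_span_singleton, Ideal.mem_inf]

lemma prime_colon_inf {J J' : Ideal R} {f : R} {P : Ideal R} (hP : P.IsPrime)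
    (hPf : P = Submodule.colon (J ⊓ J') (Ideal.span {f})) :
    (∃ g, P = Submodule.colon J (Ideal.span {(g : R)})) ∨
      (∃ g, P = Submodule.colon J' (Ideal.span {(g : R)})) := by
  by_cases h : P = Submodule.colon J (Ideal.span {f})
  · exact Or.inl ⟨f, h⟩
  · right
    have hle : P ≤ Submodule.colon J (Ideal.span {f}) := by
      rw [hPf, colon_inf_span]
      exact inf_le_left
    obtain ⟨a, haJ, haP⟩ : ∃ a, a ∈ Submodule.colon J (Ideal.span {f}) ∧ a ∉ P := by
      by_contra hc
      push_neg at hc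
      exact h (le_antisymm hle hc)
    refine ⟨a * f, le_antisymm ?_ ?_⟩
    · intro p hp
      rw [Ideal.mem_colon_span_singleton]
      have hpf : p * f ∈ J ⊓ J' := by
        rw [hPf] at hp
        exact Ideal.mem_colon_span_singleton.mp hp
      have : a * (p * f) ∈ J' := Ideal.mul_mem_left _ _ hpf.2
      convert this using 1
      ring
    · intro b hb
      rw [Ideal.mem_colon_span_singleton] at hb
      have haf : a * f ∈ J := Ideal.mem_colon_span_singleton.mp haJ
      have hbaf : b * a * f ∈ J := by
        have : b * (a * f) ∈ J := Ideal.mul_mem_left _ _ haf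
        convert this using 1; ring
      have hbaf' : b * a * f ∈ J' := by
        have := hb
        rw [show b * (a * f) = b * a * f by ring] at this
        exact this
      have : b * a ∈ P := by
        rw [hPf, Ideal.mem_colon_span_singleton]
        exact Ideal.mem_inf.mpr ⟨hbaf, hbaf'⟩
      rcases hP.mem_or_mem this with h1 | h2
      · exact h1
      · exact absurd h2 haP

lemma prime_colon_finset_inf {ι : Type*} {s : Finset ι} {g : ι → Ideal R} {f : R}
    {P : Ideal R} (hP : P.IsPrime) (h : P = Submodule.colon (s.inf g) (Ideal.span {f})) :
    ∃ c ∈ s, ∃ h', P = Submodule.colon (g c) (Ideal.span {(h' : R)}) := by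
  induction s using Finset.cons_induction generalizing f with
  | empty =>
      rw [Finset.inf_empty, colon_top_span] at h
      exact absurd h hP.ne_top
  | cons a s ha ih =>
      rw [Finset.inf_cons] at h
      rcases prime_colon_inf hP h with ⟨g', hg'⟩ | ⟨g', hg'⟩
      · exact ⟨a, Finset.mem_cons_self a s, g', hg'⟩
      · obtain ⟨c, hc, h', hh'⟩ := ih hg'
        exact ⟨c, Finset.mem_cons.mpr (Or.inr hc), h', hh'⟩

lemma prime_colon_prime {P' : Ideal R} (hP' : P'.IsPrime) {h : R} {P : Ideal R}
    (hP : P.IsPrime) (heq : P = Submodule.colon P' (Ideal.span {h})) : P = P' := by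
  by_cases hh : h ∈ P'
  · exfalso
    apply hP.ne_top
    rw [heq, eq_top_iff]
    intro r _
    rw [Ideal.mem_colon_span_singleton]
    exact Ideal.mul_mem_left _ _ hh
  · apply le_antisymm
    · intro p hp
      rw [heq, Ideal.mem_colon_span_singleton] at hp
      rcases hP'.mem_or_mem hp with h1 | h2
      · exact h1
      · exact absurd h2 hh
    · intro p hp
      rw [heq, Ideal.mem_colon_span_singleton]
      exact Ideal.mul_mem_right _ _ hp

end Colon

section Ass

variable {R : Type*} [CommRing R] {I : Ideal R}

lemma colon_eq_annihilator (I : Ideal R) (f : R) :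
    Submodule.colon I (Ideal.span {f}) =
      (Submodule.span R {Ideal.Quotient.mk I f}).annihilator := by
  ext r
  rw [Submodule.mem_annihilator_span_singleton, Ideal.mem_colon_span_singleton]
  have hsmul : r • Ideal.Quotient.mk I f = Ideal.Quotient.mk I (r * f) := rfl
  rw [hsmul, Ideal.Quotient.eq_zero_iff_mem]

lemma colon_mem_associatedPrimes {f : R}
    (hP : (Submodule.colon I (Ideal.span {f})).IsPrime) :
    Submodule.colon I (Ideal.span {f}) ∈ associatedPrimes R (R ⧸ I) :=
  by
    have e : (⊥ : Submodule R (R ⧸ I)).colon {Ideal.Quotient.mk I f} =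
        Submodule.colon I (Ideal.span {f}) := by
      ext r
      rw [Submodule.mem_colon_singleton, Ideal.mem_colon_span_singleton, Submodule.mem_bot,
        ← Ideal.Quotient.eq_zero_iff_mem]
      exact Iff.rfl
    exact ⟨hP, Ideal.Quotient.mk I f, by rw [e, hP.radical]⟩

lemma exists_colon_of_mem_associatedPrimes [IsNoetherianRing R] {P : Ideal R}
    (hP : P ∈ associatedPrimes R (R ⧸ I)) :
    P.IsPrime ∧ ∃ g, P = Submodule.colon I (Ideal.span {(g : R)}) := by
  obtain ⟨hprime, x, hx⟩ := isAssociatedPrime_iff.mp hP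
  obtain ⟨g, rfl⟩ := Ideal.Quotient.mk_surjective x
  refine ⟨hprime, g, ?_⟩
  rw [hx]
  ext r
  rw [Submodule.mem_colon_singleton, Ideal.mem_colon_span_singleton, Submodule.mem_bot,
    ← Ideal.Quotient.eq_zero_iff_mem]
  exact Iff.rfl

end Ass




variable {K : Type*} [Field K] {V : Type*} {G : SimpleGraph V}

def IsStable (G : SimpleGraph V) (A : Finset V) : Prop :=
  ∀ i ∈ A, ∀ j ∈ A, ¬ G.Adj i j

def NbrCover (G : SimpleGraph V) (A : Finset V) : Prop :=
  ∀ i j, G.Adj i j → (∃ a ∈ A, G.Adj a i) ∨ (∃ a ∈ A, G.Adj a j)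

def Good (G : SimpleGraph V) (A : Finset V) : Prop :=
  IsStable G A ∧ NbrCover G A

def vSet (G : SimpleGraph V) : Set ℕ := {k | ∃ A : Finset V, Good G A ∧ A.card = k}

def vC (G : SimpleGraph V) : ℕ := sInf (vSet G)

def IsCover (G : SimpleGraph V) (C : Finset V) : Prop :=
  ∀ i j, G.Adj i j → i ∈ C ∨ j ∈ C

variable [Fintype V]

def covers (G : SimpleGraph V) : Finset (Finset V) :=
  Finset.univ.filter (IsCover G)

lemma exists_maximal_stable (B : Finset V) (hB : IsStable G B) :
    ∃ T, B ⊆ T ∧ IsStable G T ∧ ∀ v ∉ T, ∃ a ∈ T, G.Adj a v := by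
  classical
  have hne : (Finset.univ.filter (fun T : Finset V => B ⊆ T ∧ IsStable G T)).Nonempty :=
    ⟨B, by simp [hB]⟩
  obtain ⟨T, hT, hmax⟩ := Finset.exists_max_image _ Finset.card hne
  rw [Finset.mem_filter] at hT
  refine ⟨T, hT.2.1, hT.2.2, ?_⟩
  intro v hv
  by_contra hc
  push_neg at hc
  have hstab : IsStable G (insert v T) := by
    intro i hi j hj hadj
    rcases Finset.mem_insert.mp hi with hiv | hi
    · rcases Finset.mem_insert.mp hj with hjv | hj
      · rw [hiv, hjv] at hadj
        exact G.irrefl hadj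
      · rw [hiv] at hadj
        exact hc j hj (G.adj_symm hadj)
    · rcases Finset.mem_insert.mp hj with hjv | hj
      · rw [hjv] at hadj
        exact hc i hi hadj
      · exact hT.2.2 i hi j hj hadj
  have hmem : insert v T ∈ Finset.univ.filter (fun T : Finset V => B ⊆ T ∧ IsStable G T) := by
    simp only [Finset.mem_filter, Finset.mem_univ, true_and]
    exact ⟨hT.2.1.trans (Finset.subset_insert _ _), hstab⟩
  have := hmax _ hmem
  rw [Finset.card_insert_of_notMem hv] at this
  omega

lemma exists_good (G : SimpleGraph V) : ∃ A : Finset V, Good G A := by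
  obtain ⟨T, _, hstab, hmax⟩ := exists_maximal_stable (G := G) ∅ (by intro i hi; simp at hi)
  refine ⟨T, hstab, ?_⟩
  intro i j hadj
  by_cases hi : i ∈ T
  · exact Or.inr ⟨i, hi, hadj⟩
  · exact Or.inl (hmax i hi)

lemma vSet_nonempty (G : SimpleGraph V) : (vSet G).Nonempty := by
  obtain ⟨A, hA⟩ := exists_good G
  exact ⟨A.card, A, hA, rfl⟩

lemma edgeIdeal_eq_inf :
    edgeIdeal K G = (covers G).inf (fun C => PC K (C : Set V)) := by
  apply le_antisymm
  · apply Finset.le_inf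
    intro C hC
    rw [covers, Finset.mem_filter] at hC
    intro p hp
    rw [mem_PC]
    intro d hd
    obtain ⟨i, j, hij, h1, h2⟩ := mem_edgeIdeal.mp hp d hd
    rcases hC.2 i j hij with h | h
    · exact ⟨i, h, by omega⟩
    · exact ⟨j, h, by omega⟩
  · intro p hp
    rw [mem_edgeIdeal]
    intro d hd
    by_contra hc
    have hstab : IsStable G d.support := by
      intro i hi j hj hadj
      have h1 : 1 ≤ d i := Nat.one_le_iff_ne_zero.mpr (Finsupp.mem_support_iff.mp hi)
      have h2 : 1 ≤ d j := Nat.one_le_iff_ne_zero.mpr (Finsupp.mem_support_iff.mp hj)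
      exact hc ⟨i, j, hadj, h1, h2⟩
    obtain ⟨T, hBT, hTstab, -⟩ := exists_maximal_stable d.support hstab
    set C : Finset V := Finset.univ \ T with hC
    have hCcover : IsCover G C := by
      intro i j hadj
      by_contra h
      push_neg at h
      have hiT : i ∈ T := by
        have := h.1
        simp only [hC, Finset.mem_sdiff, Finset.mem_univ, true_and, not_not] at this
        exact this
      have hjT : j ∈ T := by
        have := h.2
        simp only [hC, Finset.mem_sdiff, Finset.mem_univ, true_and, not_not] at this
        exact this
      exact hTstab i hiT j hjT hadj
    have hCmem : C ∈ covers G := by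
      rw [covers, Finset.mem_filter]
      exact ⟨Finset.mem_univ _, hCcover⟩
    have hle : (covers G).inf (fun C => PC K (C : Set V)) ≤ PC K (C : Set V) :=
      Finset.inf_le hCmem
    have hpPC : p ∈ PC K (C : Set V) := hle hp
    obtain ⟨i, hiC, hdi⟩ := mem_PC.mp hpPC d hd
    rw [Finset.mem_coe, hC, Finset.mem_sdiff] at hiC
    exact hiC.2 (hBT (Finsupp.mem_support_iff.mpr hdi))





def vNumSet {σ K : Type*} [Field K] (I : Ideal (MvPolynomial σ K)) : Set ℕ :=
  {k : ℕ | ∃ f : MvPolynomial σ K, f.IsHomogeneous k ∧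
    Submodule.colon I (Ideal.span {f}) ∈
      associatedPrimes (MvPolynomial σ K) (MvPolynomial σ K ⧸ I)}

lemma vNumber_def {σ K : Type*} [Field K] (I : Ideal (MvPolynomial σ K)) :
    vNumber I = sInf (vNumSet I) := rfl

variable {K : Type*} [Field K] {V : Type*} {G : SimpleGraph V}

def NbrSet (G : SimpleGraph V) (A : Finset V) : Set V := {v | ∃ a ∈ A, G.Adj a v}

def expA (A : Finset V) : V →₀ ℕ := ∑ a ∈ A, Finsupp.single a 1

lemma expA_apply (A : Finset V) (v : V) : expA A v = if v ∈ A then 1 else 0 := by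
  rw [expA, Finset.sum_apply']
  rw [Finset.sum_congr rfl (fun a _ => Finsupp.single_apply)]
  exact Finset.sum_ite_eq' A v (fun _ => 1)

lemma prod_X_eq (A : Finset V) :
    (∏ a ∈ A, X a : MvPolynomial V K) = monomial (expA A) 1 := by
  induction A using Finset.induction with
  | empty => simp [expA]
  | @insert a A ha ih =>
      have hstep : expA (insert a A) = Finsupp.single a 1 + expA A := by
        rw [expA, expA, Finset.sum_insert ha]
      rw [Finset.prod_insert ha, ih, hstep, X, monomial_mul, one_mul]

lemma prod_X_homog (A : Finset V) :
    (∏ a ∈ A, X a : MvPolynomial V K).IsHomogeneous A.card := by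
  have := MvPolynomial.IsHomogeneous.prod A (fun a => (X a : MvPolynomial V K))
    (fun _ => 1) (fun i _ => isHomogeneous_X K i)
  simpa using this

lemma colon_good {A : Finset V} (hA : Good G A) :
    Submodule.colon (edgeIdeal K G) (Ideal.span {(∏ a ∈ A, X a : MvPolynomial V K)}) =
      PC K (NbrSet G A) := by
  apply le_antisymm
  · intro p hp
    rw [Ideal.mem_colon_span_singleton, prod_X_eq] at hp
    rw [mem_PC]
    intro d hd
    have hco : coeff (d + expA A) (p * monomial (expA A) 1) = coeff d p := by
      rw [coeff_mul_monomial, mul_one]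
    have hsupp : (d + expA A) ∈ (p * monomial (expA A) (1 : K)).support :=
      mem_support_iff.mpr (by rw [hco]; exact mem_support_iff.mp hd)
    obtain ⟨i, j, hij, h1, h2⟩ := mem_edgeIdeal.mp hp _ hsupp
    rw [Finsupp.add_apply, expA_apply] at h1 h2
    by_cases hiA : i ∈ A <;> by_cases hjA : j ∈ A
    · exact absurd hij (hA.1 i hiA j hjA)
    · rw [if_neg hjA] at h2
      exact ⟨j, ⟨i, hiA, hij⟩, by omega⟩
    · rw [if_neg hiA] at h1
      exact ⟨i, ⟨j, hjA, G.adj_symm hij⟩, by omega⟩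
    · rw [if_neg hiA] at h1
      rw [if_neg hjA] at h2
      rcases hA.2 i j hij with ⟨a, haA, hai⟩ | ⟨a, haA, haj⟩
      · exact ⟨i, ⟨a, haA, hai⟩, by omega⟩
      · exact ⟨j, ⟨a, haA, haj⟩, by omega⟩
  · rw [PC, Ideal.span_le]
    rintro _ ⟨v, hv, rfl⟩
    obtain ⟨a, haA, hav⟩ := hv
    rw [SetLike.mem_coe, Ideal.mem_colon_span_singleton, ← Finset.mul_prod_erase A _ haA,
      ← mul_assoc]
    exact Ideal.mul_mem_right _ _ (Ideal.subset_span ⟨v, a, G.adj_symm hav, rfl⟩)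

lemma card_mem_vNumSet [Fintype V] {A : Finset V} (hA : Good G A) :
    A.card ∈ vNumSet (edgeIdeal K G) := by
  refine ⟨∏ a ∈ A, X a, prod_X_homog A, ?_⟩
  exact colon_mem_associatedPrimes (by rw [colon_good hA]; exact PC_prime _)

lemma X_mul_monomial (i : V) (d : V →₀ ℕ) :
    (X i * monomial d 1 : MvPolynomial V K) = monomial (Finsupp.single i 1 + d) 1 := by
  rw [X, monomial_mul, one_mul]

lemma exists_good_of_mem_vNumSet [Fintype V] {k : ℕ} (hk : k ∈ vNumSet (edgeIdeal K G)) :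
    ∃ A : Finset V, Good G A ∧ A.card ≤ k := by
  obtain ⟨f, hfhom, hass⟩ := hk
  set I := edgeIdeal K G with hI
  set P := Submodule.colon I (Ideal.span {f}) with hPdef
  have hP : P.IsPrime := hass.1
  have hf0 : f ≠ 0 := by
    rintro rfl
    rw [hPdef, colon_span_zero] at hP
    exact hP.ne_top rfl
  have hPinf : P = Submodule.colon ((covers G).inf fun Cov => PC K ((Cov : Finset V) : Set V))
      (Ideal.span {f}) := by
    rw [hPdef, hI, edgeIdeal_eq_inf]
  obtain ⟨Cov, hCmem, g, hg⟩ := prime_colon_finset_inf hP hPinf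
  have hPC : P = PC K (Cov : Set V) := prime_colon_prime (PC_prime _) hP hg
  have hCcover : IsCover G Cov := (Finset.mem_filter.mp hCmem).2
  -- X i * monomial d 1 ∈ I for i ∈ Cov, d ∈ f.support
  have key : ∀ i ∈ Cov, ∀ d ∈ f.support, (monomial (Finsupp.single i 1 + d) (1 : K)) ∈ I := by
    intro i hiC d hd
    have hXiP : X i ∈ P := by
      rw [hPC]
      exact Ideal.subset_span ⟨i, hiC, rfl⟩
    have hXif : X i * f ∈ I := Ideal.mem_colon_span_singleton.mp hXiP
    have hsupp : Finsupp.single i 1 + d ∈ (X i * f).support :=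
      mem_support_iff.mpr (by rw [coeff_X_mul]; exact mem_support_iff.mp hd)
    obtain ⟨u, w, huw, h1, h2⟩ := mem_edgeIdeal.mp hXif _ hsupp
    exact monomial_mem_edgeIdeal.mpr ⟨u, w, huw, h1, h2⟩
  have hPCle : ∀ d ∈ f.support,
      PC K (Cov : Set V) ≤ Submodule.colon I (Ideal.span {monomial d (1 : K)}) := by
    intro d hd
    rw [PC, Ideal.span_le]
    rintro _ ⟨i, hiC, rfl⟩
    rw [SetLike.mem_coe, Ideal.mem_colon_span_singleton, X_mul_monomial]
    exact key i hiC d hd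
  have hinfle : (f.support).inf
      (fun d => Submodule.colon I (Ideal.span {monomial d (1 : K)})) ≤ P := by
    intro p hp
    rw [hPdef, Ideal.mem_colon_span_singleton]
    have hfsum : p * f = ∑ d ∈ f.support, p * monomial d (coeff d f) := by
      conv_lhs => rw [f.as_sum]
      rw [Finset.mul_sum]
    rw [hfsum]
    apply Ideal.sum_mem
    intro d hd
    have hmono : monomial d (coeff d f) = C (coeff d f) * monomial d 1 := by
      rw [C_mul_monomial, mul_one]
    have hpd : p * monomial d (1 : K) ∈ I := by
      have hle : (f.support).inf
          (fun d => Submodule.colon I (Ideal.span {monomial d (1 : K)})) ≤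
            Submodule.colon I (Ideal.span {monomial d (1 : K)}) := Finset.inf_le hd
      exact Ideal.mem_colon_span_singleton.mp (hle hp)
    rw [hmono, show p * (C (coeff d f) * monomial d 1) = C (coeff d f) * (p * monomial d 1)
      by ring]
    exact Ideal.mul_mem_left _ _ hpd
  obtain ⟨d₀, hd₀, hled₀⟩ := (Ideal.IsPrime.inf_le' hP).mp hinfle
  have hPeq : P = Submodule.colon I (Ideal.span {monomial d₀ (1 : K)}) := by
    apply le_antisymm
    · rw [hPC]
      exact hPCle d₀ hd₀
    · exact hled₀
  have hmono0 : (monomial d₀ (1 : K)) ∉ I := by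
    intro hmem
    apply hP.ne_top
    rw [Ideal.eq_top_iff_one, hPeq, Ideal.mem_colon_span_singleton, one_mul]
    exact hmem
  refine ⟨d₀.support, ⟨?_, ?_⟩, ?_⟩
  · -- stable
    intro i hi j hj hadj
    apply hmono0
    apply monomial_mem_edgeIdeal.mpr
    exact ⟨i, j, hadj, Nat.one_le_iff_ne_zero.mpr (Finsupp.mem_support_iff.mp hi),
      Nat.one_le_iff_ne_zero.mpr (Finsupp.mem_support_iff.mp hj)⟩
  · -- NbrCover
    have hC2A : ∀ v ∈ Cov, ∃ a ∈ d₀.support, G.Adj a v := by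
      intro v hvC
      have hXvP : X v ∈ P := by
        rw [hPC]
        exact Ideal.subset_span ⟨v, hvC, rfl⟩
      have : X v * monomial d₀ (1 : K) ∈ I := by
        rw [hPeq, Ideal.mem_colon_span_singleton] at hXvP
        exact hXvP
      rw [X_mul_monomial] at this
      obtain ⟨i, j, hij, h1, h2⟩ := monomial_mem_edgeIdeal.mp this
      rw [Finsupp.add_apply, Finsupp.single_apply] at h1 h2
      by_cases hiv : v = i <;> by_cases hjv : v = j
      · exact absurd (hiv ▸ hjv ▸ hij) (G.irrefl)
      · rw [if_neg hjv] at h2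
        refine ⟨j, Finsupp.mem_support_iff.mpr (by omega), ?_⟩
        rw [← hiv] at hij
        exact G.adj_symm hij
      · rw [if_neg hiv] at h1
        refine ⟨i, Finsupp.mem_support_iff.mpr (by omega), ?_⟩
        rw [← hjv] at hij
        exact hij
      · rw [if_neg hiv] at h1
        rw [if_neg hjv] at h2
        exfalso
        apply hmono0
        exact monomial_mem_edgeIdeal.mpr ⟨i, j, hij, by omega, by omega⟩
    intro i j hadj
    rcases hCcover i j hadj with h | h
    · exact Or.inl (hC2A i h)
    · exact Or.inr (hC2A j h)
  · -- card
    have hw := hfhom (mem_support_iff.mp hd₀)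
    have hwsum : (Finsupp.weight 1) d₀ = d₀.sum fun _ c => c := by
      rw [Finsupp.weight_apply]
      apply Finsupp.sum_congr
      intro i _
      simp
    rw [hwsum] at hw
    calc d₀.support.card = ∑ _i ∈ d₀.support, 1 := by rw [Finset.card_eq_sum_ones]
      _ ≤ ∑ i ∈ d₀.support, d₀ i := Finset.sum_le_sum (fun i hi =>
          Nat.one_le_iff_ne_zero.mpr (Finsupp.mem_support_iff.mp hi))
      _ = k := hw

theorem vNumber_eq_vC [Fintype V] (G : SimpleGraph V) :
    vNumber (edgeIdeal K G) = vC G := by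
  have hup : ∀ k ∈ vSet G, k ∈ vNumSet (edgeIdeal K G) := by
    rintro k ⟨A, hA, rfl⟩
    exact card_mem_vNumSet hA
  rw [vNumber_def, vC]
  apply le_antisymm
  · exact Nat.sInf_le (hup _ (Nat.sInf_mem (vSet_nonempty G)))
  · have hne : (vNumSet (edgeIdeal K G)).Nonempty :=
      ⟨_, hup _ (Nat.sInf_mem (vSet_nonempty G))⟩
    obtain ⟨A, hA, hle⟩ := exists_good_of_mem_vNumSet (Nat.sInf_mem hne)
    exact le_trans (Nat.sInf_le ⟨A, hA, rfl⟩) hle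





/-- Arithmetic version of the edge relation of `cyclePathSum`. -/
def Hval (n : ℕ) (a b : ℕ) : Prop :=
  (b = a + 1 ∧ a + 1 < n) ∨ (a = 0 ∧ b = n - 1) ∨ (a = 0 ∧ b = n) ∨ (b = a + 1 ∧ n ≤ a)

/-- Arithmetic version of the edge relation of the cycle. -/
def Cval (n : ℕ) (a b : ℕ) : Prop :=
  (b = a + 1 ∧ a + 1 < n) ∨ (a = 0 ∧ b = n - 1)

lemma H_adj_iff {n m : ℕ} {u v : Fin (n + (m - 1))} :
    (cyclePathSum n m).Adj u v ↔
      u.val ≠ v.val ∧ (Hval n u.val v.val ∨ Hval n v.val u.val) := by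
  rw [cyclePathSum, SimpleGraph.fromRel_adj, Ne, Ne, Fin.ext_iff]
  rfl

lemma fin_sub_val_eq_one {n : ℕ} (u v : Fin n) :
    (u - v).val = 1 ↔
      (u.val = v.val + 1 ∨ (u.val = 0 ∧ v.val = n - 1 ∧ v.val ≠ 0)) := by
  have hu := u.isLt
  have hv := v.isLt
  rw [Fin.sub_def]
  have hval : ((⟨(n - v.val + u.val) % n, by apply Nat.mod_lt; omega⟩ : Fin n) : ℕ)
      = (n - v.val + u.val) % n := rfl
  rw [hval]
  rcases le_or_gt v.val u.val with h | h
  · have heq : (n - v.val + u.val) % n = u.val - v.val := by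
      have h2 : n - v.val + u.val = (u.val - v.val) + n := by omega
      rw [h2, Nat.add_mod_right, Nat.mod_eq_of_lt (by omega)]
    rw [heq]
    omega
  · have heq : (n - v.val + u.val) % n = n - v.val + u.val :=
      Nat.mod_eq_of_lt (by omega)
    rw [heq]
    omega

lemma cycle_adj_iff {n : ℕ} (hn : 3 ≤ n) {u v : Fin n} :
    (SimpleGraph.cycleGraph n).Adj u v ↔
      Cval n u.val v.val ∨ Cval n v.val u.val := by
  have hu := u.isLt
  have hv := v.isLt
  rw [SimpleGraph.cycleGraph_adj', fin_sub_val_eq_one, fin_sub_val_eq_one]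
  simp only [Cval]
  omega

lemma path_adj_iff {k : ℕ} {u v : Fin k} :
    (SimpleGraph.pathGraph k).Adj u v ↔ u.val + 1 = v.val ∨ v.val + 1 = u.val :=
  SimpleGraph.pathGraph_adj

/-- The cycle vertices inside `H`. -/
def cycToH (n m : ℕ) (x : Fin n) : Fin (n + (m - 1)) :=
  ⟨x.val, by have := x.isLt; omega⟩

/-- The path (`P_{m-2}`) vertices inside `H`. -/
def pathToH (n m : ℕ) (x : Fin (m - 2)) : Fin (n + (m - 1)) :=
  ⟨n + 1 + x.val, by have := x.isLt; omega⟩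

section Maps

variable {n m : ℕ} (hn : 3 ≤ n) (hm : 4 ≤ m)

lemma cycToH_val (x : Fin n) : (cycToH n m x).val = x.val := rfl

lemma pathToH_val (x : Fin (m - 2)) : (pathToH n m x).val = n + 1 + x.val := rfl

include hn hm in
lemma cyc_adj_H {x y : Fin n} :
    (SimpleGraph.cycleGraph n).Adj x y ↔
      (cyclePathSum n m).Adj (cycToH n m x) (cycToH n m y) := by
  have hx := x.isLt
  have hy := y.isLt
  rw [cycle_adj_iff hn, H_adj_iff, cycToH_val, cycToH_val]
  simp only [Cval, Hval]
  omega

include hn hm in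
lemma path_adj_H {x y : Fin (m - 2)} :
    (SimpleGraph.pathGraph (m - 2)).Adj x y ↔
      (cyclePathSum n m).Adj (pathToH n m x) (pathToH n m y) := by
  have hx := x.isLt
  have hy := y.isLt
  rw [path_adj_iff, H_adj_iff, pathToH_val, pathToH_val]
  simp only [Hval]
  omega

include hn in
lemma no_mixed_adj {u v : Fin (n + (m - 1))} (hu : u.val < n) (hv : n + 1 ≤ v.val) :
    ¬ (cyclePathSum n m).Adj u v := by
  rw [H_adj_iff]
  simp only [Hval]
  omega

end Maps




lemma cycle_adj_sub {n : ℕ} [NeZero n] {x y c : Fin n} :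
    (SimpleGraph.cycleGraph n).Adj (x - c) (y - c) ↔
      (SimpleGraph.cycleGraph n).Adj x y := by
  rw [SimpleGraph.cycleGraph_adj', SimpleGraph.cycleGraph_adj',
    sub_sub_sub_cancel_right, sub_sub_sub_cancel_right]

lemma good_translate {n : ℕ} [NeZero n] {A : Finset (Fin n)}
    (hA : Good (SimpleGraph.cycleGraph n) A) (c : Fin n) :
    Good (SimpleGraph.cycleGraph n) (A.image (· - c)) := by
  constructor
  · intro i hi j hj hadj
    obtain ⟨x, hx, rfl⟩ := Finset.mem_image.mp hi
    obtain ⟨y, hy, rfl⟩ := Finset.mem_image.mp hj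
    exact hA.1 x hx y hy (cycle_adj_sub.mp hadj)
  · intro i j hadj
    have hadj' : (SimpleGraph.cycleGraph n).Adj (i + c) (j + c) := by
      rw [← cycle_adj_sub (c := c), add_sub_cancel_right, add_sub_cancel_right]
      exact hadj
    rcases hA.2 _ _ hadj' with ⟨b, hb, hbadj⟩ | ⟨b, hb, hbadj⟩
    · left
      refine ⟨b - c, Finset.mem_image_of_mem _ hb, ?_⟩
      have := cycle_adj_sub (c := c) (x := b) (y := i + c)
      rw [add_sub_cancel_right] at this
      exact this.mpr hbadj
    · right
      refine ⟨b - c, Finset.mem_image_of_mem _ hb, ?_⟩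
      have := cycle_adj_sub (c := c) (x := b) (y := j + c)
      rw [add_sub_cancel_right] at this
      exact this.mpr hbadj

variable {n m : ℕ}

theorem vC_upper (hn : 3 ≤ n) (hm : 4 ≤ m) :
    vC (cyclePathSum n m) ≤
      vC (SimpleGraph.cycleGraph n) + vC (SimpleGraph.pathGraph (m - 2)) := by
  haveI : NeZero n := ⟨by omega⟩
  obtain ⟨A1₀, hA1₀, hA1card⟩ := Nat.sInf_mem (vSet_nonempty (SimpleGraph.cycleGraph n))
  obtain ⟨A2, hA2, hA2card⟩ := Nat.sInf_mem (vSet_nonempty (SimpleGraph.pathGraph (m - 2)))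
  have hA1ne : A1₀.Nonempty := by
    rcases Finset.eq_empty_or_nonempty A1₀ with rfl | h
    · exfalso
      have hadj : (SimpleGraph.cycleGraph n).Adj ⟨0, by omega⟩ ⟨1, by omega⟩ := by
        rw [cycle_adj_iff hn]
        left; left
        exact ⟨rfl, show (0:ℕ) + 1 < n by omega⟩
      rcases hA1₀.2 _ _ hadj with ⟨b, hb, _⟩ | ⟨b, hb, _⟩ <;> simp at hb
    · exact h
  obtain ⟨a, ha⟩ := hA1ne
  set c0 : Fin n := ⟨0, by omega⟩ with hc0
  set A1 : Finset (Fin n) := A1₀.image (· - a) with hA1def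
  have hA1 : Good (SimpleGraph.cycleGraph n) A1 := good_translate hA1₀ a
  have h0A1 : c0 ∈ A1 := by
    apply Finset.mem_image.mpr
    refine ⟨a, ha, ?_⟩
    apply Fin.ext
    rw [sub_self]
    rfl
  set A : Finset (Fin (n + (m - 1))) :=
    (A1.image (cycToH n m)) ∪ (A2.image (pathToH n m)) with hAdef
  have hstab : IsStable (cyclePathSum n m) A := by
    intro i hi j hj hadj
    rcases Finset.mem_union.mp hi with hi' | hi' <;>
      rcases Finset.mem_union.mp hj with hj' | hj'
    · obtain ⟨x, hx, rfl⟩ := Finset.mem_image.mp hi'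
      obtain ⟨y, hy, rfl⟩ := Finset.mem_image.mp hj'
      exact hA1.1 x hx y hy ((cyc_adj_H hn hm).mpr hadj)
    · obtain ⟨x, hx, rfl⟩ := Finset.mem_image.mp hi'
      obtain ⟨y, hy, rfl⟩ := Finset.mem_image.mp hj'
      exact no_mixed_adj hn (by have := x.isLt; exact this) (by simp [pathToH_val]) hadj
    · obtain ⟨x, hx, rfl⟩ := Finset.mem_image.mp hi'
      obtain ⟨y, hy, rfl⟩ := Finset.mem_image.mp hj'
      exact no_mixed_adj hn (by have := y.isLt; exact this) (by simp [pathToH_val])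
        ((cyclePathSum n m).adj_symm hadj)
    · obtain ⟨x, hx, rfl⟩ := Finset.mem_image.mp hi'
      obtain ⟨y, hy, rfl⟩ := Finset.mem_image.mp hj'
      exact hA2.1 x hx y hy ((path_adj_H hn hm).mpr hadj)
  have hcover_cyc : ∀ w : Fin (n + (m - 1)), ∀ x : Fin n, cycToH n m x = w →
      (∃ b ∈ A1, (SimpleGraph.cycleGraph n).Adj b x) →
      ∃ b ∈ A, (cyclePathSum n m).Adj b w := by
    rintro w x rfl ⟨b, hb, hbadj⟩
    exact ⟨cycToH n m b, Finset.mem_union_left _ (Finset.mem_image_of_mem _ hb),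
      (cyc_adj_H hn hm).mp hbadj⟩
  have hcover_path : ∀ w : Fin (n + (m - 1)), ∀ x : Fin (m - 2), pathToH n m x = w →
      (∃ b ∈ A2, (SimpleGraph.pathGraph (m - 2)).Adj b x) →
      ∃ b ∈ A, (cyclePathSum n m).Adj b w := by
    rintro w x rfl ⟨b, hb, hbadj⟩
    exact ⟨pathToH n m b, Finset.mem_union_right _ (Finset.mem_image_of_mem _ hb),
      (path_adj_H hn hm).mp hbadj⟩
  have hc0A : cycToH n m c0 ∈ A := Finset.mem_union_left _ (Finset.mem_image_of_mem _ h0A1)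
  have hub : ∀ u v : Fin (n + (m - 1)), Hval n u.val v.val → u.val ≠ v.val →
      (∃ b ∈ A, (cyclePathSum n m).Adj b u) ∨
        (∃ b ∈ A, (cyclePathSum n m).Adj b v) := by
    intro u v hr hne
    have hult := u.isLt
    have hvlt := v.isLt
    rcases hr with ⟨hv1, hlt⟩ | ⟨hu0, hv⟩ | ⟨hu0, hvn⟩ | ⟨hv1, hge⟩
    · -- cycle edge (u, u+1), both < n
      set x : Fin n := ⟨u.val, by omega⟩ with hx
      set y : Fin n := ⟨v.val, by omega⟩ with hy
      have hadjxy : (SimpleGraph.cycleGraph n).Adj x y := by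
        rw [cycle_adj_iff hn]
        left; left
        refine ⟨show v.val = u.val + 1 from hv1, show u.val + 1 < n from hlt⟩
      rcases hA1.2 x y hadjxy with hbx | hby
      · exact Or.inl (hcover_cyc u x (Fin.ext rfl) hbx)
      · exact Or.inr (hcover_cyc v y (Fin.ext rfl) hby)
    · -- cycle edge (0, n-1)
      set x : Fin n := ⟨u.val, by omega⟩ with hx
      set y : Fin n := ⟨v.val, by omega⟩ with hy
      have hadjxy : (SimpleGraph.cycleGraph n).Adj x y := by
        rw [cycle_adj_iff hn]
        left; right
        exact ⟨show u.val = 0 from hu0, show v.val = n - 1 from hv⟩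
      rcases hA1.2 x y hadjxy with hbx | hby
      · exact Or.inl (hcover_cyc u x (Fin.ext rfl) hbx)
      · exact Or.inr (hcover_cyc v y (Fin.ext rfl) hby)
    · -- edge (0, n): vertex 0 is in A
      right
      refine ⟨cycToH n m c0, hc0A, ?_⟩
      rw [H_adj_iff]
      constructor
      · show (0 : ℕ) ≠ v.val
        omega
      · left
        right; right; left
        exact ⟨rfl, by omega⟩
    · -- path edge (u, u+1) with n ≤ u
      by_cases hu : u.val = n
      · -- edge (n, n+1): covered by vertex 0
        left
        refine ⟨cycToH n m c0, hc0A, ?_⟩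
        rw [H_adj_iff]
        constructor
        · show (0 : ℕ) ≠ u.val
          omega
        · left
          right; right; left
          exact ⟨rfl, by omega⟩
      · -- inner path edge
        set x : Fin (m - 2) := ⟨u.val - (n + 1), by omega⟩ with hx
        set y : Fin (m - 2) := ⟨v.val - (n + 1), by omega⟩ with hy
        have hadjxy : (SimpleGraph.pathGraph (m - 2)).Adj x y := by
          rw [path_adj_iff]
          left
          show u.val - (n + 1) + 1 = v.val - (n + 1)
          omega
        have hxu : pathToH n m x = u := by
          apply Fin.ext
          show n + 1 + (u.val - (n + 1)) = u.val
          omega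
        have hyv : pathToH n m y = v := by
          apply Fin.ext
          show n + 1 + (v.val - (n + 1)) = v.val
          omega
        rcases hA2.2 x y hadjxy with hbx | hby
        · exact Or.inl (hcover_path u x hxu hbx)
        · exact Or.inr (hcover_path v y hyv hby)
  have hcov : NbrCover (cyclePathSum n m) A := by
    intro u v hadj
    rw [H_adj_iff] at hadj
    obtain ⟨hne, hr | hr⟩ := hadj
    · exact hub u v hr hne
    · exact (hub v u hr (Ne.symm hne)).symm
  have hmem : A.card ∈ vSet (cyclePathSum n m) := ⟨A, ⟨hstab, hcov⟩, rfl⟩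
  calc vC (cyclePathSum n m) ≤ A.card := Nat.sInf_le hmem
    _ ≤ (A1.image (cycToH n m)).card + (A2.image (pathToH n m)).card :=
        Finset.card_union_le _ _
    _ ≤ A1.card + A2.card :=
        add_le_add (Finset.card_image_le) (Finset.card_image_le)
    _ ≤ A1₀.card + A2.card := Nat.add_le_add_right Finset.card_image_le _
    _ = vC (SimpleGraph.cycleGraph n) + vC (SimpleGraph.pathGraph (m - 2)) := by
        rw [hA1card, hA2card]
        rfl



set_option maxHeartbeats 1000000


variable {n m : ℕ}

theorem vC_lower (hn : 3 ≤ n) (hm : 4 ≤ m) :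
    vC (SimpleGraph.cycleGraph n) + vC (SimpleGraph.pathGraph (m - 2)) ≤
      vC (cyclePathSum n m) + 1 := by
  obtain ⟨Aopt, hAopt, hAcard⟩ := Nat.sInf_mem (vSet_nonempty (cyclePathSum n m))
  obtain ⟨vn, hvnv⟩ : ∃ vn : Fin (n + (m - 1)), vn.val = n := ⟨⟨n, by omega⟩, rfl⟩
  set Ac : Finset (Fin n) :=
    Finset.univ.filter (fun x : Fin n => cycToH n m x ∈ Aopt) with hAcdef
  set Ap : Finset (Fin (m - 2)) :=
    Finset.univ.filter (fun x : Fin (m - 2) => pathToH n m x ∈ Aopt) with hApdef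
  have hmemAc : ∀ x : Fin n, x ∈ Ac ↔ cycToH n m x ∈ Aopt := by
    intro x
    simp [hAcdef]
  have hmemAp : ∀ x : Fin (m - 2), x ∈ Ap ↔ pathToH n m x ∈ Aopt := by
    intro x
    simp [hApdef]
  -- stability of the pieces
  have hAcStab : IsStable (SimpleGraph.cycleGraph n) Ac := by
    intro i hi j hj hadj
    exact hAopt.1 _ ((hmemAc i).mp hi) _ ((hmemAc j).mp hj) ((cyc_adj_H hn hm).mp hadj)
  have hApStab : IsStable (SimpleGraph.pathGraph (m - 2)) Ap := by
    intro i hi j hj hadj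
    exact hAopt.1 _ ((hmemAp i).mp hi) _ ((hmemAp j).mp hj) ((path_adj_H hn hm).mp hadj)
  -- covering transfer for the cycle part
  have hcov_or : ∀ x : Fin n, (∃ b ∈ Aopt, (cyclePathSum n m).Adj b (cycToH n m x)) →
      (∃ a ∈ Ac, (SimpleGraph.cycleGraph n).Adj a x) ∨ (x.val = 0 ∧ vn ∈ Aopt) := by
    rintro x ⟨b, hb, hadj⟩
    have hblt := b.isLt
    have hxlt := x.isLt
    by_cases hbn : b.val < n
    · left
      set a : Fin n := ⟨b.val, hbn⟩ with hadef
      have hab : cycToH n m a = b := Fin.ext rfl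
      refine ⟨a, (hmemAc a).mpr (by rw [hab]; exact hb), ?_⟩
      apply (cyc_adj_H hn hm).mpr
      rw [hab]
      exact hadj
    · right
      rw [H_adj_iff] at hadj
      simp only [Hval, cycToH_val] at hadj
      have hbn' : b.val = n ∧ x.val = 0 := by omega
      exact ⟨hbn'.2, by rwa [show vn = b from Fin.ext (by omega)]⟩
  -- covering transfer for the path part
  have hcov_or_p : ∀ x : Fin (m - 2),
      (∃ b ∈ Aopt, (cyclePathSum n m).Adj b (pathToH n m x)) →
      (∃ a ∈ Ap, (SimpleGraph.pathGraph (m - 2)).Adj a x) ∨ (x.val = 0 ∧ vn ∈ Aopt) := by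
    rintro x ⟨b, hb, hadj⟩
    have hblt := b.isLt
    have hxlt := x.isLt
    by_cases hbn : n + 1 ≤ b.val
    · left
      set a : Fin (m - 2) := ⟨b.val - (n + 1), by omega⟩ with hadef
      have hab : pathToH n m a = b := by
        apply Fin.ext
        show n + 1 + (b.val - (n + 1)) = b.val
        omega
      refine ⟨a, (hmemAp a).mpr (by rw [hab]; exact hb), ?_⟩
      apply (path_adj_H hn hm).mpr
      rw [hab]
      exact hadj
    · right
      rw [H_adj_iff] at hadj
      simp only [Hval, pathToH_val] at hadj
      have hbn' : b.val = n ∧ x.val = 0 := by omega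
      exact ⟨hbn'.2, by rwa [show vn = b from Fin.ext (by omega)]⟩
  -- cardinality bookkeeping
  set low := Aopt.filter (fun u => u.val < n) with hlowdef
  set mid := Aopt.filter (fun u => u.val = n) with hmiddef
  set high := Aopt.filter (fun u => n + 1 ≤ u.val) with hhighdef
  have hAc_eq : Ac.card = low.card := by
    apply Finset.card_bij (fun x _ => cycToH n m x)
    · intro a ha
      rw [Finset.mem_filter]
      exact ⟨(hmemAc a).mp ha, by have := a.isLt; exact this⟩
    · intro a _ b _ hab
      have h2 := congrArg (fun t : Fin (n + (m - 1)) => t.val) hab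
      exact Fin.ext h2
    · intro b hb
      rw [Finset.mem_filter] at hb
      refine ⟨⟨b.val, hb.2⟩, (hmemAc _).mpr ?_, Fin.ext rfl⟩
      rw [show cycToH n m ⟨b.val, hb.2⟩ = b from Fin.ext rfl]
      exact hb.1
  have hAp_eq : Ap.card = high.card := by
    apply Finset.card_bij (fun x _ => pathToH n m x)
    · intro a ha
      rw [Finset.mem_filter]
      exact ⟨(hmemAp a).mp ha, by show n + 1 ≤ n + 1 + a.val; omega⟩
    · intro a _ b _ hab
      apply Fin.ext
      have := congrArg Fin.val hab
      simp only [pathToH_val] at this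
      omega
    · intro b hb
      rw [Finset.mem_filter] at hb
      have hble := b.isLt
      refine ⟨⟨b.val - (n + 1), by omega⟩, (hmemAp _).mpr ?_, ?_⟩
      · rw [show pathToH n m ⟨b.val - (n + 1), by omega⟩ = b from
          Fin.ext (by show n + 1 + (b.val - (n + 1)) = b.val; omega)]
        exact hb.1
      · exact Fin.ext (by show n + 1 + (b.val - (n + 1)) = b.val; omega)
  have hsplit : Aopt.card = low.card + mid.card + high.card := by
    rw [hlowdef, hmiddef, hhighdef]
    have h1 : (Aopt.filter (fun u => u.val < n)).card +
        (Aopt.filter (fun u => ¬ u.val < n)).card = Aopt.card :=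
      Finset.card_filter_add_card_filter_not _
    have h2 : ((Aopt.filter (fun u => ¬ u.val < n)).filter (fun u => u.val = n)).card +
        ((Aopt.filter (fun u => ¬ u.val < n)).filter (fun u => ¬ u.val = n)).card =
        (Aopt.filter (fun u => ¬ u.val < n)).card :=
      Finset.card_filter_add_card_filter_not _
    have e1 : (Aopt.filter (fun u => ¬ u.val < n)).filter (fun u => u.val = n) =
        Aopt.filter (fun u => u.val = n) := by
      rw [Finset.filter_filter]
      exact Finset.filter_congr fun u _ => by omega
    have e2 : (Aopt.filter (fun u => ¬ u.val < n)).filter (fun u => ¬ u.val = n) =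
        Aopt.filter (fun u => n + 1 ≤ u.val) := by
      rw [Finset.filter_filter]
      exact Finset.filter_congr fun u _ => by have := u.isLt; omega
    rw [e1, e2] at h2
    omega
  -- the cycle-side witness
  by_cases hvn : vn ∈ Aopt
  · -- vn ∈ Aopt : may need one extra vertex on each side
    have hmid1 : mid.card = 1 := by
      have : mid = {vn} := by
        ext u
        rw [hmiddef, Finset.mem_filter, Finset.mem_singleton]
        constructor
        · rintro ⟨hu, hval⟩
          exact Fin.ext (by omega)
        · rintro rfl
          exact ⟨hvn, hvnv⟩
      rw [this, Finset.card_singleton]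
    obtain ⟨c0, hc0v⟩ : ∃ c0 : Fin n, c0.val = 0 := ⟨⟨0, by omega⟩, rfl⟩
    obtain ⟨c1, hc1v⟩ : ∃ c1 : Fin n, c1.val = 1 := ⟨⟨1, by omega⟩, rfl⟩
    obtain ⟨cn1, hcn1v⟩ : ∃ cn1 : Fin n, cn1.val = n - 1 := ⟨⟨n - 1, by omega⟩, rfl⟩
    have hreccyc : ∀ x y : Fin n, (SimpleGraph.cycleGraph n).Adj x y → x.val = 0 →
        ∀ A1 : Finset (Fin n), c0 ∈ A1 →
        (∃ a ∈ A1, (SimpleGraph.cycleGraph n).Adj a y) := by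
      intro x y hadj hx0 A1 h0
      refine ⟨c0, h0, ?_⟩
      rwa [show c0 = x from Fin.ext (by omega)]
    obtain ⟨A1, hA1good, hA1card⟩ : ∃ A1 : Finset (Fin n),
        Good (SimpleGraph.cycleGraph n) A1 ∧ A1.card ≤ Ac.card + 1 := by
      by_cases hc : c1 ∈ Ac ∨ cn1 ∈ Ac
      · -- Ac itself works
        refine ⟨Ac, ⟨hAcStab, ?_⟩, by omega⟩
        intro x y hadj
        have hH := (cyc_adj_H hn hm).mp hadj
        have hcase : ∀ u w : Fin n, (SimpleGraph.cycleGraph n).Adj u w →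
            ((∃ a ∈ Ac, (SimpleGraph.cycleGraph n).Adj a u) ∨ (u.val = 0 ∧ vn ∈ Aopt)) →
            (∃ a ∈ Ac, (SimpleGraph.cycleGraph n).Adj a u) := by
          intro u w _ hor
          rcases hor with h | ⟨hu0, -⟩
          · exact h
          · have hu : u = c0 := Fin.ext (by omega)
            rcases hc with h1 | h1
            · refine ⟨c1, h1, ?_⟩
              rw [hu, cycle_adj_iff hn]
              right
              left
              exact ⟨by omega, by omega⟩
            · refine ⟨cn1, h1, ?_⟩
              rw [hu, cycle_adj_iff hn]
              right
              right
              exact ⟨by omega, by omega⟩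
        rcases hAopt.2 _ _ hH with h | h
        · exact Or.inl (hcase x y hadj (hcov_or x h))
        · exact Or.inr (hcase y x ((SimpleGraph.cycleGraph n).adj_symm hadj) (hcov_or y h))
      · -- add the vertex 0
        push_neg at hc
        refine ⟨insert c0 Ac, ⟨?_, ?_⟩, Finset.card_insert_le _ _⟩
        · -- stability
          intro i hi j hj hadj
          rcases Finset.mem_insert.mp hi with hi0 | hi' <;>
            rcases Finset.mem_insert.mp hj with hj0 | hj'
          · rw [hi0, hj0] at hadj
            exact (SimpleGraph.cycleGraph n).irrefl hadj
          · rw [hi0] at hadj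
            have hj1 : j.val = 1 ∨ j.val = n - 1 := by
              rw [cycle_adj_iff hn] at hadj
              simp only [Cval] at hadj
              omega
            rcases hj1 with h | h
            · exact hc.1 (by rwa [show c1 = j from Fin.ext (by omega)])
            · exact hc.2 (by rwa [show cn1 = j from Fin.ext (by omega)])
          · rw [hj0] at hadj
            have hadj' := (SimpleGraph.cycleGraph n).adj_symm hadj
            have hi1 : i.val = 1 ∨ i.val = n - 1 := by
              rw [cycle_adj_iff hn] at hadj'
              simp only [Cval] at hadj'
              omega
            rcases hi1 with h | h
            · exact hc.1 (by rwa [show c1 = i from Fin.ext (by omega)])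
            · exact hc.2 (by rwa [show cn1 = i from Fin.ext (by omega)])
          · exact hAcStab i hi' j hj' hadj
        · -- covering
          intro x y hadj
          have hH := (cyc_adj_H hn hm).mp hadj
          rcases hAopt.2 _ _ hH with h | h
          · rcases hcov_or x h with ⟨a, ha, haadj⟩ | ⟨hx0, -⟩
            · exact Or.inl ⟨a, Finset.mem_insert_of_mem ha, haadj⟩
            · exact Or.inr (hreccyc x y hadj hx0 _ (Finset.mem_insert_self _ _))
          · rcases hcov_or y h with ⟨a, ha, haadj⟩ | ⟨hy0, -⟩
            · exact Or.inr ⟨a, Finset.mem_insert_of_mem ha, haadj⟩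
            · exact Or.inl (hreccyc y x ((SimpleGraph.cycleGraph n).adj_symm hadj) hy0 _
                (Finset.mem_insert_self _ _))
    -- path-side witness
    obtain ⟨p0, hp0v⟩ : ∃ p0 : Fin (m - 2), p0.val = 0 := ⟨⟨0, by omega⟩, rfl⟩
    obtain ⟨p1, hp1v⟩ : ∃ p1 : Fin (m - 2), p1.val = 1 := ⟨⟨1, by omega⟩, rfl⟩
    have hrecpath : ∀ x y : Fin (m - 2), (SimpleGraph.pathGraph (m - 2)).Adj x y →
        x.val = 0 → ∀ A2 : Finset (Fin (m - 2)), p0 ∈ A2 →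
        (∃ a ∈ A2, (SimpleGraph.pathGraph (m - 2)).Adj a y) := by
      intro x y hadj hx0 A2 h0
      refine ⟨p0, h0, ?_⟩
      rwa [show p0 = x from Fin.ext (by omega)]
    obtain ⟨A2, hA2good, hA2card⟩ : ∃ A2 : Finset (Fin (m - 2)),
        Good (SimpleGraph.pathGraph (m - 2)) A2 ∧ A2.card ≤ Ap.card + 1 := by
      by_cases hp : p1 ∈ Ap
      · refine ⟨Ap, ⟨hApStab, ?_⟩, by omega⟩
        intro x y hadj
        have hH := (path_adj_H hn hm).mp hadj
        have hcase : ∀ u : Fin (m - 2),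
            ((∃ a ∈ Ap, (SimpleGraph.pathGraph (m - 2)).Adj a u) ∨ (u.val = 0 ∧ vn ∈ Aopt)) →
            (∃ a ∈ Ap, (SimpleGraph.pathGraph (m - 2)).Adj a u) := by
          intro u hor
          rcases hor with h | ⟨hu0, -⟩
          · exact h
          · refine ⟨p1, hp, ?_⟩
            rw [path_adj_iff]
            omega
        rcases hAopt.2 _ _ hH with h | h
        · exact Or.inl (hcase x (hcov_or_p x h))
        · exact Or.inr (hcase y (hcov_or_p y h))
      · refine ⟨insert p0 Ap, ⟨?_, ?_⟩, Finset.card_insert_le _ _⟩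
        · intro i hi j hj hadj
          rcases Finset.mem_insert.mp hi with hi0 | hi' <;>
            rcases Finset.mem_insert.mp hj with hj0 | hj'
          · rw [hi0, hj0] at hadj
            exact (SimpleGraph.pathGraph (m - 2)).irrefl hadj
          · rw [hi0] at hadj
            rw [path_adj_iff] at hadj
            have hj1 : j.val = 1 := by omega
            exact hp (by rwa [show p1 = j from Fin.ext (by omega)])
          · rw [hj0] at hadj
            have hadj' := (SimpleGraph.pathGraph (m - 2)).adj_symm hadj
            rw [path_adj_iff] at hadj'
            have hi1 : i.val = 1 := by omega
            exact hp (by rwa [show p1 = i from Fin.ext (by omega)])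
          · exact hApStab i hi' j hj' hadj
        · intro x y hadj
          have hH := (path_adj_H hn hm).mp hadj
          rcases hAopt.2 _ _ hH with h | h
          · rcases hcov_or_p x h with ⟨a, ha, haadj⟩ | ⟨hx0, -⟩
            · exact Or.inl ⟨a, Finset.mem_insert_of_mem ha, haadj⟩
            · exact Or.inr (hrecpath x y hadj hx0 _ (Finset.mem_insert_self _ _))
          · rcases hcov_or_p y h with ⟨a, ha, haadj⟩ | ⟨hy0, -⟩
            · exact Or.inr ⟨a, Finset.mem_insert_of_mem ha, haadj⟩
            · exact Or.inl (hrecpath y x ((SimpleGraph.pathGraph (m - 2)).adj_symm hadj) hy0 _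
                (Finset.mem_insert_self _ _))
    have hv1 : vC (SimpleGraph.cycleGraph n) ≤ A1.card := Nat.sInf_le ⟨A1, hA1good, rfl⟩
    have hv2 : vC (SimpleGraph.pathGraph (m - 2)) ≤ A2.card := Nat.sInf_le ⟨A2, hA2good, rfl⟩
    have hAoptcard : Aopt.card = vC (cyclePathSum n m) := hAcard
    omega
  · -- vn ∉ Aopt : the pieces themselves work
    have hmid0 : mid.card = 0 := by
      rw [Finset.card_eq_zero]
      ext u
      rw [hmiddef, Finset.mem_filter]
      simp only [Finset.notMem_empty, iff_false]
      rintro ⟨hu, hval⟩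
      exact hvn (by rwa [show vn = u from Fin.ext (by omega)])
    have hA1good : Good (SimpleGraph.cycleGraph n) Ac := by
      refine ⟨hAcStab, ?_⟩
      intro x y hadj
      have hH := (cyc_adj_H hn hm).mp hadj
      rcases hAopt.2 _ _ hH with h | h
      · rcases hcov_or x h with h' | ⟨-, hmem⟩
        · exact Or.inl h'
        · exact absurd hmem hvn
      · rcases hcov_or y h with h' | ⟨-, hmem⟩
        · exact Or.inr h'
        · exact absurd hmem hvn
    have hA2good : Good (SimpleGraph.pathGraph (m - 2)) Ap := by
      refine ⟨hApStab, ?_⟩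
      intro x y hadj
      have hH := (path_adj_H hn hm).mp hadj
      rcases hAopt.2 _ _ hH with h | h
      · rcases hcov_or_p x h with h' | ⟨-, hmem⟩
        · exact Or.inl h'
        · exact absurd hmem hvn
      · rcases hcov_or_p y h with h' | ⟨-, hmem⟩
        · exact Or.inr h'
        · exact absurd hmem hvn
    have hv1 : vC (SimpleGraph.cycleGraph n) ≤ Ac.card := Nat.sInf_le ⟨Ac, hA1good, rfl⟩
    have hv2 : vC (SimpleGraph.pathGraph (m - 2)) ≤ Ap.card := Nat.sInf_le ⟨Ap, hA2good, rfl⟩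
    have hAoptcard : Aopt.card = vC (cyclePathSum n m) := hAcard
    omega


end VN

/-- v(C_n) + v(P_{m-2}) - 1 ≤ v(H) ≤ v(C_n) + v(P_{m-2}) for the 1-clique sum H
of C_n and P_m. -/
theorem vNumber_cyclePathSum {K : Type*} [Field K] (n m : ℕ) (hn : 3 ≤ n) (hm : 4 ≤ m) :
    vNumber (edgeIdeal K (SimpleGraph.cycleGraph n)) +
        vNumber (edgeIdeal K (SimpleGraph.pathGraph (m - 2))) - 1 ≤
      vNumber (edgeIdeal K (cyclePathSum n m)) ∧
    vNumber (edgeIdeal K (cyclePathSum n m)) ≤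
      vNumber (edgeIdeal K (SimpleGraph.cycleGraph n)) +
        vNumber (edgeIdeal K (SimpleGraph.pathGraph (m - 2))) := by
  rw [VN.vNumber_eq_vC, VN.vNumber_eq_vC, VN.vNumber_eq_vC]
  have h1 := VN.vC_upper (n := n) (m := m) hn hm
  have h2 := VN.vC_lower (n := n) (m := m) hn hm
  exact ⟨by omega, h1⟩
end
end

section
/- Let n ≥ 2 and let A be an independent set of the path P_n such that the neighborhood N_{P_n}(A) is a vertex cover of P_n and |A| is minimum among all independent sets with this property. Then A does not contain both endpoints x_1 and x_n of the path. -/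
open MvPolynomial

noncomputable section

/-- `A` is an independent (stable) set of `G`. -/
def IsIndependentSet {V : Type*} (G : SimpleGraph V) (A : Set V) : Prop :=
  ∀ u ∈ A, ∀ v ∈ A, ¬ G.Adj u v

/-- `C` is a vertex cover of `G`: every edge meets `C`. -/
def IsVertexCover {V : Type*} (G : SimpleGraph V) (C : Set V) : Prop :=
  ∀ u v, G.Adj u v → u ∈ C ∨ v ∈ C

/-- The neighborhood `N_G(A)` of a set of vertices `A`. -/
def neighborSetOf {V : Type*} (G : SimpleGraph V) (A : Set V) : Set V :=
  {x | ∃ a ∈ A, G.Adj x a}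

private lemma chain_count' : ∀ N : ℕ, ∀ T : Finset ℕ, 0 ∈ T →
    (∀ x ∈ T, x < N → ∃ y ∈ T, x < y ∧ y ≤ x + 4) → N + 4 ≤ 4 * T.card := by
  intro N
  induction N using Nat.strong_induction_on with
  | _ N ih =>
    intro T h0 hgap
    rcases Nat.eq_zero_or_pos N with hN | hN
    · have : 0 < T.card := Finset.card_pos.mpr ⟨0, h0⟩
      omega
    · obtain ⟨y, hyT, hy0, hy4⟩ := hgap 0 h0 hN
      rcases le_or_gt N y with hNy | hyN
      · have h2 : 1 < T.card := Finset.one_lt_card.mpr ⟨0, h0, y, hyT, by omega⟩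
        omega
      · set T' := (T.filter (fun x => y ≤ x)).image (fun x => x - y) with hT'
        have h0' : 0 ∈ T' :=
          Finset.mem_image.mpr ⟨y, Finset.mem_filter.mpr ⟨hyT, le_refl y⟩, by omega⟩
        have hgap' : ∀ x ∈ T', x < N - y → ∃ z ∈ T', x < z ∧ z ≤ x + 4 := by
          intro x hx hxN
          obtain ⟨x0, hx0, rfl⟩ := Finset.mem_image.mp hx
          obtain ⟨hx0T, hx0y⟩ := Finset.mem_filter.mp hx0
          obtain ⟨z, hzT, hz1, hz2⟩ := hgap x0 hx0T (by omega)
          exact ⟨z - y, Finset.mem_image.mpr ⟨z, Finset.mem_filter.mpr ⟨hzT, by omega⟩, rfl⟩,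
            by omega, by omega⟩
        have hIH := ih (N - y) (by omega) T' h0' hgap'
        have hcard : T'.card + 1 ≤ T.card := by
          have hinj : Set.InjOn (fun x => x - y) (T.filter (fun x => y ≤ x)) := by
            intro a ha b hb hab
            simp only [Finset.coe_filter, Set.mem_setOf_eq] at ha hb
            simp only at hab
            omega
          have h1 : T'.card = (T.filter (fun x => y ≤ x)).card :=
            Finset.card_image_of_injOn hinj
          have h2 : T.filter (fun x => y ≤ x) ⊂ T :=
            Finset.filter_ssubset.mpr ⟨0, h0, by omega⟩
          have := Finset.card_lt_card h2
          omega
        omega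

/-- a minimum-size independent set of `P_n` whose neighborhood is a vertex cover
cannot contain both endpoints. -/
theorem path_min_stable_set_no_both_endpoints (n : ℕ) (hn : 2 ≤ n) (A : Set (Fin n))
    (hindep : IsIndependentSet (SimpleGraph.pathGraph n) A)
    (hcover : IsVertexCover (SimpleGraph.pathGraph n)
      (neighborSetOf (SimpleGraph.pathGraph n) A))
    (hmin : ∀ B : Set (Fin n), IsIndependentSet (SimpleGraph.pathGraph n) B →
      IsVertexCover (SimpleGraph.pathGraph n) (neighborSetOf (SimpleGraph.pathGraph n) B) →
      A.ncard ≤ B.ncard) :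
    ¬((⟨0, by omega⟩ : Fin n) ∈ A ∧ (⟨n - 1, by omega⟩ : Fin n) ∈ A) := by
  classical
  rintro ⟨h0, hn1⟩
  rcases Nat.lt_or_ge n 3 with h3 | h3
  · have hn2 : n = 2 := by omega
    subst hn2
    exact hindep _ h0 _ hn1 (SimpleGraph.pathGraph_adj.mpr (by norm_num))
  -- window property from the cover hypothesis
  have hwin : ∀ i : ℕ, i + 2 ≤ n → ∃ a ∈ A, i ≤ a.val + 1 ∧ a.val ≤ i + 2 := by
    intro i hi
    have hadj : (SimpleGraph.pathGraph n).Adj ⟨i, by omega⟩ ⟨i + 1, by omega⟩ :=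
      SimpleGraph.pathGraph_adj.mpr (Or.inl rfl)
    rcases hcover _ _ hadj with h | h <;>
    · obtain ⟨a, haA, hadj'⟩ := h
      rw [SimpleGraph.pathGraph_adj] at hadj'
      simp only [Fin.val_mk] at hadj'
      exact ⟨a, haA, by omega⟩
  -- lower bound on |A|
  set T := A.toFinset.image Fin.val with hT
  have hTcard : T.card = A.ncard := by
    rw [Set.ncard_eq_toFinset_card', hT,
      Finset.card_image_of_injective _ Fin.val_injective]
  have h0T : 0 ∈ T := Finset.mem_image.mpr ⟨⟨0, by omega⟩, Set.mem_toFinset.mpr h0, rfl⟩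
  have hlastT : n - 1 ∈ T := Finset.mem_image.mpr ⟨⟨n - 1, by omega⟩, Set.mem_toFinset.mpr hn1, rfl⟩
  have hgapT : ∀ x ∈ T, x < n - 1 → ∃ y ∈ T, x < y ∧ y ≤ x + 4 := by
    intro x hxT hx
    rcases le_or_gt (x + 4) (n - 1) with h | h
    · obtain ⟨a, haA, h1, h2⟩ := hwin (x + 2) (by omega)
      exact ⟨a.val, Finset.mem_image.mpr ⟨a, Set.mem_toFinset.mpr haA, rfl⟩, by omega, by omega⟩
    · exact ⟨n - 1, hlastT, by omega, by omega⟩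
  have hlow : n + 3 ≤ 4 * A.ncard := by
    have := chain_count' (n - 1) T h0T hgapT
    omega
  -- the competitor set B
  obtain ⟨c, hc2, hcn, hcm⟩ : ∃ c, c ≤ 2 ∧ n % 4 ≠ c ∧ (n + 3 - c) % 4 ≠ 0 := by
    refine ⟨if n % 4 = 2 then 0 else (n - 3) % 4, ?_, ?_, ?_⟩ <;> split_ifs <;> omega
  set B : Set (Fin n) := {x : Fin n | x.val % 4 = c} with hB
  have hBindep : IsIndependentSet (SimpleGraph.pathGraph n) B := by
    intro u hu v hv hadj
    rw [SimpleGraph.pathGraph_adj] at hadj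
    simp only [hB, Set.mem_setOf_eq] at hu hv
    omega
  have hkey : ∀ i : ℕ, ∀ _hi : i + 1 < n,
      ((⟨i, by omega⟩ : Fin n) ∈ neighborSetOf (SimpleGraph.pathGraph n) B) ∨
      ((⟨i + 1, by omega⟩ : Fin n) ∈ neighborSetOf (SimpleGraph.pathGraph n) B) := by
    intro i hi
    obtain ⟨j, hj4, hj1, hj2, hjn⟩ : ∃ j, j % 4 = c ∧ i ≤ j + 1 ∧ j ≤ i + 2 ∧ j < n := by
      refine ⟨i + 2 - ((i + 2 - c) % 4), ?_, ?_, ?_, ?_⟩ <;> omega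
    have hjB : (⟨j, hjn⟩ : Fin n) ∈ B := hj4
    rcases (by omega : j + 1 = i ∨ j = i ∨ j = i + 1 ∨ j = i + 2) with h | h | h | h
    · exact Or.inl ⟨⟨j, hjn⟩, hjB, SimpleGraph.pathGraph_adj.mpr (by simp [h])⟩
    · exact Or.inr ⟨⟨j, hjn⟩, hjB, SimpleGraph.pathGraph_adj.mpr (by simp [h])⟩
    · exact Or.inl ⟨⟨j, hjn⟩, hjB, SimpleGraph.pathGraph_adj.mpr (by simp [h])⟩
    · exact Or.inr ⟨⟨j, hjn⟩, hjB, SimpleGraph.pathGraph_adj.mpr (by simp [h])⟩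
  have hBcover : IsVertexCover (SimpleGraph.pathGraph n)
      (neighborSetOf (SimpleGraph.pathGraph n) B) := by
    intro u v hadj
    rw [SimpleGraph.pathGraph_adj] at hadj
    rcases hadj with h | h
    · have hi : u.val + 1 < n := by omega
      rcases hkey u.val hi with h' | h'
      · exact Or.inl (by simpa using h')
      · right
        have : (⟨u.val + 1, hi⟩ : Fin n) = v := Fin.ext h
        rwa [this] at h'
    · have hi : v.val + 1 < n := by omega
      rcases hkey v.val hi with h' | h'
      · exact Or.inr (by simpa using h')
      · left
        have : (⟨v.val + 1, hi⟩ : Fin n) = u := Fin.ext h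
        rwa [this] at h'
  -- cardinality of B
  have hfil : ∀ m : ℕ, ((Finset.range m).filter (fun x => x % 4 = c)).card = (m + 3 - c) / 4 := by
    intro m
    induction m with
    | zero => simp; omega
    | succ m ihm =>
      rw [Finset.range_add_one, Finset.filter_insert]
      split_ifs with hm
      · rw [Finset.card_insert_of_notMem (by simp)]
        omega
      · omega
  have hBcard : B.ncard = ((Finset.range n).filter (fun x => x % 4 = c)).card := by
    rw [Set.ncard_eq_toFinset_card',
      ← Finset.card_image_of_injective _ Fin.val_injective]
    congr 1
    ext j
    simp only [Finset.mem_image, Set.mem_toFinset, hB, Set.mem_setOf_eq, Finset.mem_filter,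
      Finset.mem_range]
    constructor
    · rintro ⟨a, ha, rfl⟩
      exact ⟨a.isLt, ha⟩
    · rintro ⟨hj, hj4⟩
      exact ⟨⟨j, hj⟩, hj4, rfl⟩
  have hBub : 4 * B.ncard ≤ n + 2 := by
    rw [hBcard, hfil n]
    omega
  have hAB := hmin B hBindep hBcover
  omega
end
end

section
/- Let I ⊆ S = K[x_1,…,x_t] be an 𝔪-primary monomial ideal and for each i = 1,…,t let a_i ≥ 1 be such that x_i^{a_i} ∈ G(I). Then v(I) ≤ (a_1 + a_2 + ⋯ + a_t) − t. -/
open MvPolynomial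

noncomputable section

-- auxiliary
lemma mem_maxIdeal_iff {K : Type*} [Field K] {σ : Type*} (p : MvPolynomial σ K) :
    p ∈ maxIdeal K σ ↔ constantCoeff p = 0 := by
  classical
  constructor
  · intro hp
    have hle : maxIdeal K σ ≤ RingHom.ker (constantCoeff : MvPolynomial σ K →+* K) := by
      rw [maxIdeal, Ideal.span_le]
      rintro _ ⟨i, rfl⟩
      simp [RingHom.mem_ker]
    simpa [RingHom.mem_ker] using hle hp
  · intro hp
    rw [← p.support_sum_monomial_coeff]
    apply Ideal.sum_mem
    intro d hd
    have hd0 : d ≠ 0 := by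
      rintro rfl
      exact (MvPolynomial.mem_support_iff.mp hd) hp
    obtain ⟨i, hi⟩ := Finsupp.support_nonempty_iff.mpr hd0
    have hle : Finsupp.single i 1 ≤ d :=
      Finsupp.single_le_iff.mpr (Nat.one_le_iff_ne_zero.mpr (Finsupp.mem_support_iff.mp hi))
    have heq : monomial d (coeff d p) =
        X i * monomial (d - Finsupp.single i 1) (coeff d p) := by
      rw [X, monomial_mul, one_mul, add_tsub_cancel_of_le hle]
    rw [heq]
    exact Ideal.mul_mem_right _ _ (Ideal.subset_span ⟨i, rfl⟩)

/-- if x_i^{a_i} ∈ G(I) for each i, then v(I) ≤ (∑ a_i) - t. -/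
theorem vNumber_le_sum_pure_powers {K : Type*} [Field K] (t : ℕ)
    (I : Ideal (MvPolynomial (Fin t) K))
    (hmon : IsMonomialIdeal I) (hprim : I.radical = maxIdeal K (Fin t))
    (a : Fin t → ℕ) (ha : ∀ i, 1 ≤ a i)
    (hgen : ∀ i, Finsupp.single i (a i) ∈ minimalGenerators I) :
    vNumber I ≤ (∑ i, a i) - t := by
  classical
  have deg_eq : ∀ c : Fin t →₀ ℕ, c.degree = ∑ i, c i := by
    intro c
    rw [Finsupp.degree]
    exact Finset.sum_subset (Finset.subset_univ _)
      (fun i _ hi => Finsupp.notMem_support_iff.mp hi)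
  -- 1 ∉ I
  have hone : (1 : MvPolynomial (Fin t) K) ∉ I := by
    intro h
    have h1 : (1 : MvPolynomial (Fin t) K) ∈ maxIdeal K (Fin t) := by
      rw [← hprim]; exact Ideal.le_radical h
    simpa using (mem_maxIdeal_iff _).mp h1
  set T : Set (Fin t →₀ ℕ) := {c | monomial c (1 : K) ∉ I} with hT
  -- membership bound
  have hboundc : ∀ c ∈ T, ∀ i, c i ≤ a i - 1 := by
    intro c hc i
    by_contra hlt
    have hle : Finsupp.single i (a i) ≤ c := by
      rw [Finsupp.single_le_iff]; omega
    have : monomial c (1 : K) ∈ I := by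
      have heq : monomial c (1 : K) =
          monomial (c - Finsupp.single i (a i)) (1 : K) *
            monomial (Finsupp.single i (a i)) (1 : K) := by
        rw [monomial_mul, one_mul, tsub_add_cancel_of_le hle]
      rw [heq]
      exact Ideal.mul_mem_left _ _ (hgen i).1
    exact hc this
  have hsum1 : (∑ i, (a i - 1)) + t = ∑ i, a i := by
    have h2 : ∑ i, ((a i - 1) + 1) = ∑ i, a i :=
      Finset.sum_congr rfl (fun i _ => Nat.sub_add_cancel (ha i))
    have h3 : ∑ i, ((a i - 1) + 1) = (∑ i, (a i - 1)) + ∑ _i : Fin t, (1 : ℕ) :=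
      Finset.sum_add_distrib
    have h4 : ∑ _i : Fin t, (1 : ℕ) = t := by simp
    omega
  have hbound : ∀ c ∈ T, (∑ i, c i) ≤ (∑ i, a i) - t := by
    intro c hc
    have h1 : (∑ i, c i) ≤ ∑ i, (a i - 1) :=
      Finset.sum_le_sum (fun i _ => hboundc c hc i)
    omega
  set D : Set ℕ := (fun c : Fin t →₀ ℕ => ∑ i, c i) '' T with hD
  have hDne : D.Nonempty := ⟨∑ i, (0 : Fin t →₀ ℕ) i, ⟨0, by simpa [hT] using hone, rfl⟩⟩
  have hDbdd : BddAbove D := ⟨(∑ i, a i) - t, by rintro _ ⟨c, hc, rfl⟩; exact hbound c hc⟩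
  set N := sSup D with hN
  obtain ⟨c, hcT, hcd⟩ := Nat.sSup_mem hDne hDbdd
  set f : MvPolynomial (Fin t) K := monomial c (1 : K) with hf
  have hfI : f ∉ I := hcT
  -- maxIdeal ≤ colon
  have hle : maxIdeal K (Fin t) ≤ Submodule.colon I (Ideal.span {f}) := by
    rw [maxIdeal, Ideal.span_le]
    rintro _ ⟨i, rfl⟩
    rw [SetLike.mem_coe, Ideal.mem_colon_span_singleton]
    have heq : X i * f = monomial (Finsupp.single i 1 + c) (1 : K) := by
      rw [hf, X, monomial_mul, one_mul]
    rw [heq]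
    by_contra hmem
    have hcT' : ((Finsupp.single i 1 + c : Fin t →₀ ℕ)) ∈ T := hmem
    have h1 : (∑ j, (Finsupp.single i 1 + c : Fin t →₀ ℕ) j) ≤ N := le_csSup hDbdd ⟨_, hcT', rfl⟩
    have hgt : (∑ j, (Finsupp.single i 1 + c : Fin t →₀ ℕ) j) = 1 + ∑ j, c j := by
      simp [Finsupp.add_apply, Finset.sum_add_distrib, Finsupp.single_apply]
    have hcd' : (∑ i, c i) = N := hcd
    omega
  -- colon ≤ maxIdeal
  have hcolon : Submodule.colon I (Ideal.span {f}) = maxIdeal K (Fin t) := by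
    refine le_antisymm ?_ hle
    intro g hg
    have hgf : g * f ∈ I := Ideal.mem_colon_span_singleton.mp hg
    set k := constantCoeff g with hk
    have hg' : g - C k ∈ maxIdeal K (Fin t) := by
      rw [mem_maxIdeal_iff]; simp [hk]
    have hgf' : (g - C k) * f ∈ I := Ideal.mem_colon_span_singleton.mp (hle hg')
    have hCkf : C k * f ∈ I := by
      have : C k * f = g * f - (g - C k) * f := by ring
      rw [this]; exact Ideal.sub_mem _ hgf hgf'
    by_cases hk0 : k = 0
    · simpa [hk0] using hg'
    · exfalso
      apply hfI
      have : f = C k⁻¹ * (C k * f) := by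
        rw [← mul_assoc, ← C_mul, inv_mul_cancel₀ hk0, C_1, one_mul]
      rw [this]
      exact Ideal.mul_mem_left _ _ hCkf
  -- maxIdeal is prime
  have hker : maxIdeal K (Fin t) =
      RingHom.ker (constantCoeff : MvPolynomial (Fin t) K →+* K) := by
    ext p; rw [mem_maxIdeal_iff, RingHom.mem_ker]
  have hprime : (maxIdeal K (Fin t)).IsPrime := by
    rw [hker]; exact RingHom.ker_isPrime _
  -- associated prime
  have hassoc : Submodule.colon I (Ideal.span {f}) ∈
      associatedPrimes (MvPolynomial (Fin t) K) (MvPolynomial (Fin t) K ⧸ I) := by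
    rw [AssociatedPrimes.mem_iff, isAssociatedPrime_iff]
    refine ⟨hcolon ▸ hprime, ⟨Ideal.Quotient.mk I f, ?_⟩⟩
    ext r
    rw [Ideal.mem_colon_span_singleton, Submodule.mem_colon_singleton, Submodule.mem_bot]
    rw [show r • Ideal.Quotient.mk I f = Ideal.Quotient.mk I (r * f) from rfl,
      Ideal.Quotient.eq_zero_iff_mem]
  -- conclude
  have hhom : f.IsHomogeneous (∑ i, c i) := by
    apply isHomogeneous_monomial
    rw [deg_eq]
  have hmem : (∑ i, c i) ∈ {k : ℕ | ∃ g : MvPolynomial (Fin t) K, g.IsHomogeneous k ∧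
      Submodule.colon I (Ideal.span {g}) ∈
        associatedPrimes (MvPolynomial (Fin t) K) (MvPolynomial (Fin t) K ⧸ I)} :=
    ⟨f, hhom, hassoc⟩
  exact le_trans (Nat.sInf_le hmem) (hbound c hcT)
end
end

section
/- Let I ⊆ S = K[x_1,…,x_t] be an 𝔪-primary monomial ideal. Then there exists a positive integer s_0 such that v(I^{s+1}) ≥ v(I) for all s ≥ s_0. -/
open MvPolynomial

noncomputable section

section Aux

variable {σ K : Type*} [Field K]

lemma Finsupp.degree_add' (a b : σ →₀ ℕ) :
    Finsupp.degree (a + b) = Finsupp.degree a + Finsupp.degree b := by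
  simp [Finsupp.degree_eq_weight_one]

lemma Finsupp.degree_mono' {a b : σ →₀ ℕ} (h : a ≤ b) :
    Finsupp.degree a ≤ Finsupp.degree b := by
  obtain ⟨c, rfl⟩ := le_iff_exists_add.mp h
  rw [Finsupp.degree_add']; omega

lemma maxIdeal_eq_ker [Fintype σ] :
    maxIdeal K σ = RingHom.ker (constantCoeff : MvPolynomial σ K →+* K) := by
  ext f
  rw [maxIdeal, ← Set.image_univ, mem_ideal_span_X_image]
  simp only [RingHom.mem_ker, constantCoeff_eq]
  rw [← notMem_support_iff]
  constructor
  · intro h hf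
    obtain ⟨i, _, hi⟩ := h 0 hf
    exact hi rfl
  · intro h m hm
    by_contra hc
    push_neg at hc
    have : m = 0 := by
      ext i; exact hc i (Set.mem_univ i)
    exact h (this ▸ hm)

lemma maxIdeal_isMaximal [Fintype σ] : (maxIdeal K σ).IsMaximal := by
  rw [maxIdeal_eq_ker]
  exact RingHom.ker_isMaximal_of_surjective _ fun k => ⟨C k, constantCoeff_C _ _⟩

lemma colon_eq_annihilator (J : Ideal (MvPolynomial σ K)) (f : MvPolynomial σ K) :
    Submodule.colon J (Ideal.span {f}) =
      (Submodule.span (MvPolynomial σ K) {(Ideal.Quotient.mk J f : MvPolynomial σ K ⧸ J)}).annihilator := by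
  ext r
  rw [Ideal.mem_colon_span_singleton, Submodule.mem_annihilator_span_singleton,
    show r • (Ideal.Quotient.mk J) f = (Ideal.Quotient.mk J) (r * f) from rfl,
    show ((Ideal.Quotient.mk J) (r * f) = 0) ↔ r * f ∈ J from Ideal.Quotient.eq_zero_iff_mem]


lemma pow_span_monomial (A : Set (σ →₀ ℕ)) (hA : ∀ a ∈ A, 1 ≤ Finsupp.degree a) :
    ∀ n : ℕ, ∃ B : Set (σ →₀ ℕ),
      (Ideal.span ((fun a => monomial a (1 : K)) '' A)) ^ (n + 1) =
        Ideal.span ((fun a => monomial a (1 : K)) '' B) ∧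
      ∀ b ∈ B, n + 1 ≤ Finsupp.degree b := by
  intro n
  induction n with
  | zero => exact ⟨A, by rw [pow_one], hA⟩
  | succ n ih =>
    obtain ⟨B, hB, hBdeg⟩ := ih
    refine ⟨Set.image2 (· + ·) B A, ?_, ?_⟩
    · rw [pow_succ, hB, Ideal.span_mul_span']
      congr 1
      ext g
      simp only [Set.mem_mul, Set.mem_image, Set.mem_image2]
      constructor
      · rintro ⟨_, ⟨b, hb, rfl⟩, _, ⟨a, ha, rfl⟩, rfl⟩
        exact ⟨b + a, ⟨b, hb, a, ha, rfl⟩, by rw [monomial_mul, one_mul]⟩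
      · rintro ⟨_, ⟨b, hb, a, ha, rfl⟩, rfl⟩
        exact ⟨monomial b 1, ⟨b, hb, rfl⟩, monomial a 1, ⟨a, ha, rfl⟩,
          by rw [monomial_mul, one_mul]⟩
    · rintro b ⟨b', hb', a, ha, rfl⟩
      rw [Finsupp.degree_add']
      have := hBdeg b' hb'
      have := hA a ha
      omega

lemma exists_socle [Fintype σ] (B : Set (σ →₀ ℕ)) (J : Ideal (MvPolynomial σ K))
    (_hJ : J = Ideal.span ((fun a => monomial a (1 : K)) '' B))
    (hJtop : J ≠ ⊤) (hrad : maxIdeal K σ ≤ J.radical) :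
    ∃ a : σ →₀ ℕ, monomial a (1 : K) ∉ J ∧ ∀ i : σ, X i * monomial a (1 : K) ∈ J := by
  have hc : ∀ i : σ, ∃ c : ℕ, (X i : MvPolynomial σ K) ^ c ∈ J := by
    intro i
    exact hrad (Ideal.subset_span ⟨i, rfl⟩)
  choose c hcJ using hc
  have hbound : ∀ a : σ →₀ ℕ, monomial a (1 : K) ∉ J → Finsupp.degree a ≤ ∑ i, c i := by
    intro a ha
    have hai : ∀ i : σ, a i ≤ c i := by
      intro i
      by_contra hlt
      push_neg at hlt
      apply ha
      have hle : Finsupp.single i (c i) ≤ a := Finsupp.single_le_iff.mpr hlt.le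
      have : monomial a (1 : K) =
          (X i : MvPolynomial σ K) ^ (c i) * monomial (a - Finsupp.single i (c i)) 1 := by
        rw [X_pow_eq_monomial, monomial_mul, one_mul, add_tsub_cancel_of_le hle]
      rw [this]
      exact Ideal.mul_mem_right _ _ (hcJ i)
    have h1 : Finsupp.degree a ≤ ∑ i, a i :=
      Finset.sum_le_sum_of_subset (Finset.subset_univ _)
    exact h1.trans (Finset.sum_le_sum fun i _ => hai i)
  set M : Set ℕ := {d | ∃ a : σ →₀ ℕ, monomial a (1 : K) ∉ J ∧ Finsupp.degree a = d} with hM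
  have hMne : M.Nonempty := by
    refine ⟨0, 0, ?_, map_zero Finsupp.degree⟩
    rw [monomial_zero', map_one]
    intro h1
    exact hJtop (Ideal.eq_top_iff_one J |>.mpr h1)
  have hMbdd : BddAbove M := by
    refine ⟨∑ i, c i, ?_⟩
    rintro d ⟨a, ha, rfl⟩
    exact hbound a ha
  obtain ⟨a, ha, hdeg⟩ := Nat.sSup_mem hMne hMbdd
  refine ⟨a, ha, fun i => ?_⟩
  by_contra hnot
  have hmem : Finsupp.degree (a + Finsupp.single i 1) ∈ M := by
    refine ⟨a + Finsupp.single i 1, ?_, rfl⟩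
    intro hin
    apply hnot
    have : (X i : MvPolynomial σ K) * monomial a 1 = monomial (a + Finsupp.single i 1) 1 := by
      rw [X, monomial_mul, one_mul, add_comm]
    rw [this]; exact hin
  have hle := le_csSup hMbdd hmem
  have hds : Finsupp.degree (Finsupp.single i (1 : ℕ)) = 1 := by
    exact Finsupp.degree_single _ _
  rw [Finsupp.degree_add', hds, hdeg] at hle
  omega

end Aux


/-- for an 𝔪-primary monomial ideal, v(I^{s+1}) ≥ v(I) for all s ≫ 0. -/
theorem vNumber_pow_ge_vNumber {K : Type*} [Field K] (t : ℕ)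
    (I : Ideal (MvPolynomial (Fin t) K))
    (hmon : IsMonomialIdeal I) (hprim : I.radical = maxIdeal K (Fin t)) :
    ∃ s₀ : ℕ, 0 < s₀ ∧ ∀ s, s₀ ≤ s → vNumber I ≤ vNumber (I ^ (s + 1)) := by
  rcases Nat.eq_zero_or_pos t with ht | ht
  · subst ht
    have hmax0 : maxIdeal K (Fin 0) = ⊥ := by
      rw [maxIdeal, Set.range_eq_empty, Ideal.span_empty]
    have hI : I = ⊥ := le_bot_iff.mp (by rw [← hmax0, ← hprim]; exact Ideal.le_radical)
    refine ⟨1, one_pos, fun s _ => ?_⟩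
    have h2 : I ^ (s + 1) = I := by
      rw [hI, ← Ideal.zero_eq_bot, zero_pow (Nat.succ_ne_zero s)]
    rw [h2]
  · obtain ⟨A, hA⟩ := hmon
    have hmax := maxIdeal_isMaximal (K := K) (σ := Fin t)
    have hmtop : maxIdeal K (Fin t) ≠ ⊤ := hmax.ne_top
    have hItop : I ≠ ⊤ := by
      intro h
      apply hmtop
      rw [← hprim, h]
      exact top_le_iff.mp Ideal.le_radical
    have hAdeg : ∀ a ∈ A, 1 ≤ Finsupp.degree a := by
      intro a ha
      by_contra h
      push_neg at h
      have ha0 : a = 0 := (Finsupp.degree_eq_zero_iff a).mp (by omega)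
      apply hItop
      rw [Ideal.eq_top_iff_one]
      have hmem : monomial a (1 : K) ∈ I := hA ▸ Ideal.subset_span ⟨a, ha, rfl⟩
      rwa [ha0, monomial_zero', map_one] at hmem
    refine ⟨vNumber I + 1, Nat.succ_pos _, fun s hs => ?_⟩
    set J := I ^ (s + 1) with hJdef
    obtain ⟨B, hJB, hBdeg⟩ : ∃ B : Set (Fin t →₀ ℕ),
        J = Ideal.span ((fun a => monomial a (1 : K)) '' B) ∧
        ∀ b ∈ B, s + 1 ≤ Finsupp.degree b := by
      obtain ⟨B, h1, h2⟩ := pow_span_monomial (K := K) A hAdeg s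
      exact ⟨B, by rw [hJdef, hA, h1], h2⟩
    have hradJ : J.radical = maxIdeal K (Fin t) := by
      rw [hJdef, I.radical_pow (Nat.succ_ne_zero s), hprim]
    have hJtop : J ≠ ⊤ := by
      intro h
      apply hmtop
      rw [← hradJ, h]
      exact top_le_iff.mp Ideal.le_radical
    obtain ⟨a, haJ, hai⟩ := exists_socle B J hJB hJtop (le_of_eq hradJ.symm)
    set f₀ := monomial a (1 : K) with hf₀
    have hcolon : Submodule.colon J (Ideal.span {f₀}) = maxIdeal K (Fin t) := by
      have hle : maxIdeal K (Fin t) ≤ Submodule.colon J (Ideal.span {f₀}) := by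
        rw [maxIdeal, Ideal.span_le]
        rintro _ ⟨i, rfl⟩
        rw [SetLike.mem_coe, Ideal.mem_colon_span_singleton]
        exact hai i
      have hne : Submodule.colon J (Ideal.span {f₀}) ≠ ⊤ := by
        intro h
        have h1 := (Ideal.eq_top_iff_one _).mp h
        rw [Ideal.mem_colon_span_singleton, one_mul] at h1
        exact haJ h1
      exact (hmax.eq_of_le hne hle).symm
    have hmem0 : (Finsupp.degree a) ∈ {k : ℕ | ∃ f : MvPolynomial (Fin t) K,
        f.IsHomogeneous k ∧ Submodule.colon J (Ideal.span {f}) ∈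
          associatedPrimes (MvPolynomial (Fin t) K) (MvPolynomial (Fin t) K ⧸ J)} := by
      refine ⟨f₀, isHomogeneous_monomial _ rfl, ?_⟩
      rw [AssociatedPrimes.mem_iff, isAssociatedPrime_iff]
      exact ⟨hcolon ▸ hmax.isPrime, ⟨Ideal.Quotient.mk J f₀, by
        ext r
        rw [colon_eq_annihilator, Submodule.mem_annihilator_span_singleton,
          Submodule.mem_colon_singleton, Submodule.mem_bot]⟩⟩
    rw [show vNumber J = sInf {k : ℕ | ∃ f : MvPolynomial (Fin t) K,
        f.IsHomogeneous k ∧ Submodule.colon J (Ideal.span {f}) ∈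
          associatedPrimes (MvPolynomial (Fin t) K) (MvPolynomial (Fin t) K ⧸ J)} from rfl]
    refine le_csInf ⟨_, hmem0⟩ ?_
    rintro k ⟨f, hf, hassoc⟩
    have hprime : (Submodule.colon J (Ideal.span {f})).IsPrime := hassoc.isPrime
    have hfJ : f ∉ J := by
      intro hfJ
      apply hprime.ne_top
      rw [Ideal.eq_top_iff_one, Ideal.mem_colon_span_singleton, one_mul]
      exact hfJ
    have hf0 : f ≠ 0 := fun h => hfJ (h ▸ Submodule.zero_mem J)
    have hJle : J ≤ Submodule.colon J (Ideal.span {f}) := fun r hr =>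
      Ideal.mem_colon_span_singleton.mpr (Ideal.mul_mem_right _ _ hr)
    have hmle : maxIdeal K (Fin t) ≤ Submodule.colon J (Ideal.span {f}) := by
      rw [← hradJ, ← hprime.radical]
      exact Ideal.radical_mono hJle
    set i0 : Fin t := ⟨0, ht⟩ with hi0
    have hiX : (X i0 : MvPolynomial (Fin t) K) ∈ maxIdeal K (Fin t) :=
      Ideal.subset_span ⟨i0, rfl⟩
    have hXf : X i0 * f ∈ J := Ideal.mem_colon_span_singleton.mp (hmle hiX)
    have hg0 : X i0 * f ≠ 0 := mul_ne_zero (X_ne_zero _) hf0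
    obtain ⟨xi, hxi⟩ := support_nonempty.mpr hg0
    rw [hJB, mem_ideal_span_monomial_image] at hXf
    obtain ⟨si, hsi, hle⟩ := hXf xi hxi
    have h1 : s + 1 ≤ Finsupp.degree si := hBdeg si hsi
    have h2 : Finsupp.degree si ≤ Finsupp.degree xi := Finsupp.degree_mono' hle
    have hhom : (X i0 * f).IsHomogeneous (1 + k) := (isHomogeneous_X _ _).mul hf
    have h3 : Finsupp.degree xi = 1 + k := by
      have hcoeff := hhom (MvPolynomial.mem_support_iff.mp hxi)
      rw [Finsupp.degree_eq_weight_one]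
      exact hcoeff
    omega
end
end

section
/- Let I ⊆ S = K[x_1,…,x_t] be a proper nonzero monomial ideal, let n ≥ 1, and let f be a monomial such that (I^n : f) is an associated prime of S/I^n and deg f = v(I^n). If g is a monomial that properly divides f (i.e., g divides f and g ≠ f), then v(I^n) = v(I^n : g) + deg g. -/
open MvPolynomial

noncomputable section

section Aux

variable {R : Type*} [CommRing R]

lemma annihilator_mk_span_singleton (J : Ideal R) (g : R) :
    (Submodule.span R {(Ideal.Quotient.mk J g)}).annihilator =
      Submodule.colon J (Ideal.span {g}) := by
  ext r
  rw [Submodule.mem_annihilator_span_singleton, Ideal.mem_colon_span_singleton]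
  have : r • (Ideal.Quotient.mk J g) = Ideal.Quotient.mk J (r * g) := rfl
  rw [this, Ideal.Quotient.eq_zero_iff_mem]

lemma colon_colon_singleton (N : Ideal R) (f g : R) :
    Submodule.colon (Submodule.colon N (Ideal.span {f})) (Ideal.span {g}) =
      Submodule.colon N (Ideal.span {g * f}) := by
  ext r
  simp only [Ideal.mem_colon_span_singleton, mul_assoc]

lemma colon_mem_associatedPrimes_of_isPrime (J : Ideal R) (g : R)
    (hP : (Submodule.colon J (Ideal.span {g})).IsPrime) :
    Submodule.colon J (Ideal.span {g}) ∈ associatedPrimes R (R ⧸ J) :=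
  ⟨hP, ⟨Ideal.Quotient.mk J g, by
    have h : Submodule.colon (⊥ : Submodule R (R ⧸ J)) {Ideal.Quotient.mk J g} =
        Submodule.colon J (Ideal.span {g}) := by
      ext r
      rw [Submodule.mem_colon_singleton, Submodule.mem_bot,
        ← Submodule.mem_annihilator_span_singleton, annihilator_mk_span_singleton]
    rw [h, hP.radical]⟩⟩

end Aux

lemma finsupp_degree_eq (t : ℕ) (d : Fin t →₀ ℕ) : d.degree = ∑ i, d i :=
  Finset.sum_subset d.support.subset_univ
    (fun i _ h => Finsupp.notMem_support_iff.mp h)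

/-- if the monomial x^a realizes v(I^n) (i.e. (I^n : x^a) is an associated prime
of S/I^n and deg x^a = v(I^n)), and x^c properly divides x^a, then
v(I^n) = v(I^n : x^c) + deg x^c. -/
theorem vNumber_colon_proper_divisor {K : Type*} [Field K] (t : ℕ)
    (I : Ideal (MvPolynomial (Fin t) K))
    (hmon : IsMonomialIdeal I) (hbot : I ≠ ⊥) (htop : I ≠ ⊤)
    (n : ℕ) (hn : 1 ≤ n) (a : Fin t →₀ ℕ)
    (hass : Submodule.colon (I ^ n) (Ideal.span {(monomial a (1 : K))}) ∈
      associatedPrimes (MvPolynomial (Fin t) K) (MvPolynomial (Fin t) K ⧸ (I ^ n)))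
    (hdeg : (∑ i, a i) = vNumber (I ^ n))
    (c : Fin t →₀ ℕ) (hdvd : c ≤ a) (hne : c ≠ a) :
    vNumber (I ^ n) =
      vNumber (Submodule.colon (I ^ n) (Ideal.span {(monomial c (1 : K))})) + ∑ i, c i := by
  set S := MvPolynomial (Fin t) K
  set J : Ideal S := Submodule.colon (I ^ n) (Ideal.span {(monomial c (1 : K))}) with hJ
  set b : Fin t →₀ ℕ := a - c with hb
  have hbc : b + c = a := tsub_add_cancel_of_le hdvd
  have hsum : (∑ i, b i) + (∑ i, c i) = ∑ i, a i := by
    rw [← Finset.sum_add_distrib]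
    exact Finset.sum_congr rfl (fun i _ => by rw [← hbc]; rfl)
  have hmul : (monomial b (1 : K)) * (monomial c (1 : K)) = monomial a (1 : K) := by
    rw [monomial_mul, one_mul, hbc]
  have hcol : Submodule.colon J (Ideal.span {(monomial b (1 : K))}) =
      Submodule.colon (I ^ n) (Ideal.span {(monomial a (1 : K))}) := by
    rw [hJ, colon_colon_singleton, hmul]
  have hmemJ : (∑ i, b i) ∈ {k : ℕ | ∃ f : S, f.IsHomogeneous k ∧
      Submodule.colon J (Ideal.span {f}) ∈ associatedPrimes S (S ⧸ J)} := by
    refine ⟨monomial b 1, isHomogeneous_monomial _ (finsupp_degree_eq t b), ?_⟩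
    rw [hcol]
    exact hcol ▸ colon_mem_associatedPrimes_of_isPrime J (monomial b 1)
      (by rw [hcol]; exact hass.1)
  have h1 : vNumber J ≤ ∑ i, b i := Nat.sInf_le hmemJ
  have hne2 : {k : ℕ | ∃ f : S, f.IsHomogeneous k ∧
      Submodule.colon J (Ideal.span {f}) ∈ associatedPrimes S (S ⧸ J)}.Nonempty :=
    ⟨_, hmemJ⟩
  obtain ⟨f, hf, hfass⟩ := Nat.sInf_mem hne2
  have hcol2 : Submodule.colon (I ^ n) (Ideal.span {f * monomial c (1 : K)}) =
      Submodule.colon J (Ideal.span {f}) := by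
    rw [hJ, colon_colon_singleton]
  have hmemI : (vNumber J + ∑ i, c i) ∈ {k : ℕ | ∃ g : S, g.IsHomogeneous k ∧
      Submodule.colon (I ^ n) (Ideal.span {g}) ∈
        associatedPrimes S (S ⧸ (I ^ n))} := by
    refine ⟨f * monomial c 1,
      hf.mul (isHomogeneous_monomial _ (finsupp_degree_eq t c)), ?_⟩
    exact hcol2 ▸ colon_mem_associatedPrimes_of_isPrime (I ^ n) _
      (by rw [hcol2]; exact hfass.1)
  have h2 : vNumber (I ^ n) ≤ vNumber J + ∑ i, c i := Nat.sInf_le hmemI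
  omega
end
end

section
/- Let I = ⟨x_1^{a_1}, x_2^{a_2}, …, x_t^{a_t}⟩ ⊆ S = K[x_1,…,x_t] with all a_i ≥ 1. Then for every i ∈ {1,…,t} and every n ≥ 1, the colon ideal satisfies (I^{n+1} : x_i^{a_i}) = I^n. -/
open MvPolynomial

noncomputable section

def ppB {t : ℕ} (a : Fin t → ℕ) : ℕ → Set (Fin t →₀ ℕ)
  | 0 => {0}
  | n + 1 => Set.image2 (· + ·) (Set.range fun j => Finsupp.single j (a j)) (ppB a n)

lemma ppB_key {t : ℕ} (a : Fin t → ℕ) (i : Fin t) :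
    ∀ n (m : Fin t →₀ ℕ), (∃ d ∈ ppB a (n + 1), d ≤ m + Finsupp.single i (a i)) →
      ∃ d' ∈ ppB a n, d' ≤ m := by
  intro n
  induction n with
  | zero => intro m _; exact ⟨0, rfl, zero_le⟩
  | succ n ih =>
    rintro m ⟨d, hd, hle⟩
    obtain ⟨x, hx, d', hd', rfl⟩ := hd
    obtain ⟨j, rfl⟩ := hx
    rw [Finsupp.le_def] at hle
    by_cases hj : j = i
    · subst hj
      refine ⟨d', hd', Finsupp.le_def.2 fun k => ?_⟩
      have h1 := hle k
      simp only [Finsupp.add_apply] at h1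
      omega
    · have hij : i ≠ j := fun h => hj h.symm
      have haj : a j + d' j ≤ m j := by
        have h1 := hle j
        rw [Finsupp.add_apply, Finsupp.add_apply, Finsupp.single_eq_same,
          Finsupp.single_eq_of_ne' hij] at h1
        omega
      have hside : ∀ k, d' k ≤ (m - Finsupp.single j (a j)) k + (Finsupp.single i (a i)) k := by
        intro k
        have h1 := hle k
        rw [Finsupp.add_apply, Finsupp.add_apply] at h1
        rw [Finsupp.tsub_apply]
        by_cases hkj : k = j
        · subst hkj
          rw [Finsupp.single_eq_same] at h1 ⊢
          rw [Finsupp.single_eq_of_ne' hij] at h1 ⊢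
          omega
        · rw [Finsupp.single_eq_of_ne' (fun h => hkj h.symm)] at h1 ⊢
          omega
      obtain ⟨e, he, hee⟩ := ih (m - Finsupp.single j (a j)) ⟨d', hd',
        Finsupp.le_def.2 hside⟩
      refine ⟨Finsupp.single j (a j) + e, Set.mem_image2_of_mem ⟨j, rfl⟩ he,
        Finsupp.le_def.2 fun k => ?_⟩
      have hek := Finsupp.le_def.1 hee k
      rw [Finsupp.tsub_apply] at hek
      rw [Finsupp.add_apply]
      by_cases hkj : k = j
      · subst hkj; rw [Finsupp.single_eq_same] at hek ⊢; omega
      · rw [Finsupp.single_eq_of_ne' (fun h => hkj h.symm)] at hek ⊢; omega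

lemma span_range_eq {K : Type*} [Field K] (t : ℕ) (a : Fin t → ℕ) :
    (Set.range fun j => (X j : MvPolynomial (Fin t) K) ^ a j) =
      (fun d => monomial d (1 : K)) '' Set.range (fun j => Finsupp.single j (a j)) := by
  rw [← Set.range_comp]
  exact congrArg _ (funext fun j => X_pow_eq_monomial)

lemma span_pow_eq {K : Type*} [Field K] (t : ℕ) (a : Fin t → ℕ) :
    ∀ n, (Ideal.span (Set.range fun j => (X j : MvPolynomial (Fin t) K) ^ a j)) ^ n =
      Ideal.span ((fun d => monomial d (1 : K)) '' ppB a n) := by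
  intro n
  induction n with
  | zero =>
    rw [pow_zero, ppB, Set.image_singleton]
    have h1 : (monomial (0 : Fin t →₀ ℕ) (1 : K)) = 1 := by simp
    rw [h1, Ideal.span_singleton_one, Ideal.one_eq_top]
  | succ n ih =>
    rw [pow_succ', ih, span_range_eq, Ideal.span_mul_span']
    congr 1
    rw [← Set.image2_mul, Set.image2_image_left, Set.image2_image_right, ppB,
      Set.image_image2]
    exact Set.image2_congr fun a _ b _ => by rw [monomial_mul, one_mul]

/-- for I = ⟨x_1^{a_1},…,x_t^{a_t}⟩, (I^{n+1} : x_i^{a_i}) = I^n. -/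
theorem colon_pow_pure_powers {K : Type*} [Field K] (t : ℕ) (a : Fin t → ℕ)
    (ha : ∀ i, 1 ≤ a i) :
    ∀ (i : Fin t) (n : ℕ), 1 ≤ n →
      Submodule.colon
        ((Ideal.span (Set.range fun j => (X j : MvPolynomial (Fin t) K) ^ a j)) ^ (n + 1))
        (Ideal.span {(X i : MvPolynomial (Fin t) K) ^ a i}) =
      (Ideal.span (Set.range fun j => (X j : MvPolynomial (Fin t) K) ^ a j)) ^ n := by
  intro i n _
  apply le_antisymm
  · intro h hh
    have hmem : h * (X i : MvPolynomial (Fin t) K) ^ a i ∈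
        (Ideal.span (Set.range fun j => (X j : MvPolynomial (Fin t) K) ^ a j)) ^ (n + 1) :=
      Ideal.mem_colon_span_singleton.1 hh
    rw [span_pow_eq] at hmem
    rw [span_pow_eq, mem_ideal_span_monomial_image] at *
    intro m hm
    apply ppB_key a i n m
    refine hmem (m + Finsupp.single i (a i)) ?_
    rw [X_pow_eq_monomial, mem_support_iff, coeff_mul_monomial, mul_one]
    exact mem_support_iff.1 hm
  · intro h hh
    refine Ideal.mem_colon_span_singleton.2 ?_
    have h2 : h * (X i : MvPolynomial (Fin t) K) ^ a i ∈
        (Ideal.span (Set.range fun j => (X j : MvPolynomial (Fin t) K) ^ a j)) ^ n *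
          Ideal.span (Set.range fun j => (X j : MvPolynomial (Fin t) K) ^ a j) :=
      Ideal.mul_mem_mul hh (Ideal.subset_span ⟨i, rfl⟩)
    rwa [← pow_succ] at h2
end
end
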